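/- arXiv:1807.04944 — 3 statements merged into one kernel-verified Lean document; each statement's English description precedes it below -/
import Mathlib

section
/- Fix a weight ω(x^i y^j) = n·i + m·j with n, m positive integers, and let F ∈ K[[x,y]] be nonzero with decomposition F = F_{a+b} + F_{a+b+1} + ⋯ into ω-quasihomogeneous forms (subscripts denote ω-weight). If F_{a+b} = f_a·g_b where f_a, g_b ∈ K[x,y] are quasihomogeneous of weights a and b and coprime, then there exist f = f_a + f_{a+1} + ⋯ and g = g_b + g_{b+1} + ⋯ in K[[x,y]] with F = f·g. Moreover, if f_a is irreducible as a polynomial, then f is irreducible as a power series. -/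
noncomputable section

open Classical in
/-- The `ω`-quasihomogeneous component of weight `d` of a power series in two variables,
for the weight `ω(x^i y^j) = nw·i + mw·j`. -/
def qhComponent (K : Type*) [Field K] (nw mw d : ℕ) (F : MvPowerSeries (Fin 2) K) :
    MvPowerSeries (Fin 2) K :=
  fun α : Fin 2 →₀ ℕ =>
    if nw * α 0 + mw * α 1 = d then MvPowerSeries.coeff α F else 0

/-- The weight function on the two variables. -/
def qhWeight (nw mw : ℕ) : Fin 2 → ℕ := fun i => if i = 0 then nw else mw

open MvPolynomial

section KLpart
variable {K : Type*} [Field K]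

lemma X_dvd_iff' {σ : Type*} {R : Type*} [CommRing R] (i : σ) (p : MvPolynomial σ R) :
    X i ∣ p ↔ ∀ α : σ →₀ ℕ, coeff α p ≠ 0 → α i ≠ 0 := by
  have hX : (X i : MvPolynomial σ R) = monomial (Finsupp.single i 1) 1 := by rw [X]
  rw [hX, monomial_one_dvd_iff_modMonomial_eq_zero]
  constructor
  · intro h α hα hi
    have := congrArg (coeff α) h
    rw [coeff_modMonomial_of_not_le, coeff_zero] at this
    · exact hα this
    · intro hle
      have := hle i
      simp [hi] at this
  · intro h
    ext α
    by_cases hle : Finsupp.single i 1 ≤ α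
    · rw [coeff_modMonomial_of_le _ hle, coeff_zero]
    · rw [coeff_modMonomial_of_not_le _ hle, coeff_zero]
      by_contra hα
      apply hle
      have := h α hα
      intro j
      rcases eq_or_ne j i with rfl | hj
      · simpa [Nat.one_le_iff_ne_zero] using this
      · simp [Finsupp.single_apply, Ne.symm hj]

variable (nw mw : ℕ)

lemma qh_weight_apply (α : Fin 2 →₀ ℕ) :
    (Finsupp.weight (qhWeight nw mw)) α = nw * α 0 + mw * α 1 := by
  rw [Finsupp.weight_apply, Finsupp.sum_fintype]
  · simp [qhWeight, Fin.sum_univ_two, mul_comm]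
  · intro i; simp

lemma fin2_finsupp_eq (α : Fin 2 →₀ ℕ) :
    α = Finsupp.single 0 (α 0) + Finsupp.single 1 (α 1) := by
  ext i; fin_cases i <;> simp

/-- convenient elimination form of weighted homogeneity -/
lemma wh_eq {f : MvPolynomial (Fin 2) K} {af : ℕ}
    (hf : f.IsWeightedHomogeneous (qhWeight nw mw) af) {α : Fin 2 →₀ ℕ}
    (hα : coeff α f ≠ 0) : nw * α 0 + mw * α 1 = af := by
  have := hf hα
  rwa [qh_weight_apply] at this

/-- convenient introduction form of weighted homogeneity -/
lemma wh_mk {f : MvPolynomial (Fin 2) K} {af : ℕ}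
    (h : ∀ α : Fin 2 →₀ ℕ, coeff α f ≠ 0 → nw * α 0 + mw * α 1 = af) :
    f.IsWeightedHomogeneous (qhWeight nw mw) af := by
  intro α hα
  rw [qh_weight_apply]
  exact h α hα

lemma wh_neg {f : MvPolynomial (Fin 2) K} {af : ℕ}
    (hf : f.IsWeightedHomogeneous (qhWeight nw mw) af) :
    (-f).IsWeightedHomogeneous (qhWeight nw mw) af := by
  intro α hα
  apply hf
  simpa using hα

lemma wh_sub {f g : MvPolynomial (Fin 2) K} {af : ℕ}
    (hf : f.IsWeightedHomogeneous (qhWeight nw mw) af)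
    (hg : g.IsWeightedHomogeneous (qhWeight nw mw) af) :
    (f - g).IsWeightedHomogeneous (qhWeight nw mw) af := by
  rw [sub_eq_add_neg]
  exact hf.add (wh_neg nw mw hg)

lemma comp_mul_homog (p q : MvPolynomial (Fin 2) K) (a e : ℕ)
    (hp : p.IsWeightedHomogeneous (qhWeight nw mw) a) :
    weightedHomogeneousComponent (qhWeight nw mw) (a + e) (p * q)
      = p * weightedHomogeneousComponent (qhWeight nw mw) e q := by
  ext β
  rw [coeff_weightedHomogeneousComponent, coeff_mul, coeff_mul]
  by_cases hβ : (Finsupp.weight (qhWeight nw mw)) β = a + e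
  · rw [if_pos hβ]
    apply Finset.sum_congr rfl
    intro x hx
    rw [Finset.HasAntidiagonal.mem_antidiagonal] at hx
    rw [coeff_weightedHomogeneousComponent]
    by_cases h1 : coeff x.1 p = 0
    · simp [h1]
    · have hw1 : (Finsupp.weight (qhWeight nw mw)) x.1 = a := hp h1
      have : (Finsupp.weight (qhWeight nw mw)) x.2 = e := by
        have h2 := map_add (Finsupp.weight (qhWeight nw mw)) x.1 x.2
        rw [hx, hβ, hw1] at h2; omega
      rw [if_pos this]
  · rw [if_neg hβ]
    symm
    apply Finset.sum_eq_zero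
    intro x hx
    rw [Finset.HasAntidiagonal.mem_antidiagonal] at hx
    rw [coeff_weightedHomogeneousComponent]
    by_cases h1 : coeff x.1 p = 0
    · simp [h1]
    · have hw1 : (Finsupp.weight (qhWeight nw mw)) x.1 = a := hp h1
      rw [if_neg, mul_zero]
      intro h2
      apply hβ
      have h3 := map_add (Finsupp.weight (qhWeight nw mw)) x.1 x.2
      rw [hx, hw1, h2] at h3; omega

lemma weight_forced {p q : MvPolynomial (Fin 2) K} {a d : ℕ}
    (hp0 : p ≠ 0) (hp : p.IsWeightedHomogeneous (qhWeight nw mw) a)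
    (hpq : (p * q).IsWeightedHomogeneous (qhWeight nw mw) d) :
    ∀ α : Fin 2 →₀ ℕ, coeff α q ≠ 0 → a + (Finsupp.weight (qhWeight nw mw)) α = d := by
  intro α hα
  by_contra hne
  have hcomp : weightedHomogeneousComponent (qhWeight nw mw)
      ((Finsupp.weight (qhWeight nw mw)) α) q ≠ 0 := by
    intro h
    have := congrArg (coeff α) h
    rw [coeff_weightedHomogeneousComponent, if_pos rfl, coeff_zero] at this
    exact hα this
  have h1 : p * weightedHomogeneousComponent (qhWeight nw mw)
      ((Finsupp.weight (qhWeight nw mw)) α) q ≠ 0 := mul_ne_zero hp0 hcomp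
  rw [← comp_mul_homog nw mw p q a _ hp] at h1
  exact h1 (hpq.weightedHomogeneousComponent_ne _ hne)

lemma homog_of_mul_homog {p q : MvPolynomial (Fin 2) K} {a d : ℕ}
    (hp0 : p ≠ 0) (hp : p.IsWeightedHomogeneous (qhWeight nw mw) a)
    (hpq : (p * q).IsWeightedHomogeneous (qhWeight nw mw) d) :
    q.IsWeightedHomogeneous (qhWeight nw mw) (d - a) := by
  intro α hα
  have := weight_forced nw mw hp0 hp hpq α hα
  omega

lemma le_of_mul_homog {p q : MvPolynomial (Fin 2) K} {a d : ℕ}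
    (hp0 : p ≠ 0) (hq0 : q ≠ 0) (hp : p.IsWeightedHomogeneous (qhWeight nw mw) a)
    (hpq : (p * q).IsWeightedHomogeneous (qhWeight nw mw) d) : a ≤ d := by
  obtain ⟨α, hα⟩ := exists_coeff_ne_zero hq0
  have := weight_forced nw mw hp0 hp hpq α hα
  omega

lemma not_isUnit_of_homog_pos {f : MvPolynomial (Fin 2) K} {af : ℕ}
    (haf : 1 ≤ af) (hf : f.IsWeightedHomogeneous (qhWeight nw mw) af) : ¬ IsUnit f := by
  intro hu
  obtain ⟨k, hk⟩ := hu.exists_right_inv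
  have hf0 : f ≠ 0 := by
    intro h; rw [h, zero_mul] at hk; exact zero_ne_one hk
  have hk0 : k ≠ 0 := by
    intro h; rw [h, mul_zero] at hk; exact zero_ne_one hk
  have h1 : (f * k).IsWeightedHomogeneous (qhWeight nw mw) 0 := by
    rw [hk]; exact isWeightedHomogeneous_one K _
  obtain ⟨α, hα⟩ := exists_coeff_ne_zero hk0
  have := weight_forced nw mw hf0 hf h1 α hα
  omega

/-- a weighted homogeneous polynomial of weight 0 is a constant -/
lemma homog_zero_isC (hnw : 0 < nw) (hmw : 0 < mw) {f : MvPolynomial (Fin 2) K}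
    (hf : f.IsWeightedHomogeneous (qhWeight nw mw) 0) : f = C (coeff 0 f) := by
  ext α
  rw [coeff_C]
  by_cases hα : coeff α f = 0
  · rcases eq_or_ne (0 : Fin 2 →₀ ℕ) α with rfl | hne
    · simp_all
    · rw [if_neg hne]; exact hα
  · have hw := wh_eq nw mw hf hα
    have h0 : α 0 = 0 := by
      rcases Nat.mul_eq_zero.mp (show nw * α 0 = 0 by omega) with h | h
      · omega
      · exact h
    have h1 : α 1 = 0 := by
      rcases Nat.mul_eq_zero.mp (show mw * α 1 = 0 by omega) with h | h
      · omega
      · exact h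
    have hα0 : α = 0 := by
      rw [fin2_finsupp_eq α, h0, h1]; simp
    rw [hα0]
    simp

lemma pure_y_of_not_xdvd {g : MvPolynomial (Fin 2) K} {bg : ℕ}
    (hg : g.IsWeightedHomogeneous (qhWeight nw mw) bg) (hxg : ¬ X 0 ∣ g) :
    ∃ jb, mw * jb = bg ∧ coeff (Finsupp.single 1 jb) g ≠ 0 := by
  rw [X_dvd_iff'] at hxg
  push_neg at hxg
  obtain ⟨α, hα, h0⟩ := hxg
  have hα1 : α = Finsupp.single 1 (α 1) := by
    conv_lhs => rw [fin2_finsupp_eq α]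
    rw [h0]; simp
  refine ⟨α 1, ?_, ?_⟩
  · have := wh_eq nw mw hg hα
    rw [h0, Nat.mul_zero] at this; omega
  · rwa [← hα1]

lemma strip (hnw : 0 < nw) (hmw : 0 < mw)
    {g : MvPolynomial (Fin 2) K} {bg jb : ℕ}
    (hg : g.IsWeightedHomogeneous (qhWeight nw mw) bg)
    (hjb : mw * jb = bg) (hc : coeff (Finsupp.single 1 jb) g ≠ 0)
    {h : MvPolynomial (Fin 2) K} {d : ℕ}
    (hh : h.IsWeightedHomogeneous (qhWeight nw mw) d) (hbd : bg ≤ d) :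
    ∃ t h₂ : MvPolynomial (Fin 2) K,
      t.IsWeightedHomogeneous (qhWeight nw mw) (d - bg) ∧
      h₂.IsWeightedHomogeneous (qhWeight nw mw) (d - nw) ∧
      h = t * g + X 0 * h₂ := by
  have key : ∃ t : MvPolynomial (Fin 2) K,
      t.IsWeightedHomogeneous (qhWeight nw mw) (d - bg) ∧ X 0 ∣ (h - t * g) := by
    by_cases hex : ∃ j, mw * j = d ∧ coeff (Finsupp.single 1 j) h ≠ 0
    · obtain ⟨j, hjd, he⟩ := hex
      have hjbj : jb ≤ j := by
        have : mw * jb ≤ mw * j := by omega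
        exact Nat.le_of_mul_le_mul_left this hmw
      set e := coeff (Finsupp.single 1 j) h with hedef
      set c := coeff (Finsupp.single 1 jb) g with hcdef
      set t : MvPolynomial (Fin 2) K := monomial (Finsupp.single 1 (j - jb)) (e / c)
        with htdef
      have htw : t.IsWeightedHomogeneous (qhWeight nw mw) (d - bg) := by
        apply isWeightedHomogeneous_monomial
        rw [qh_weight_apply]
        simp only [Finsupp.single_apply]
        norm_num
        rw [Nat.mul_sub]
        omega
      refine ⟨t, htw, ?_⟩
      have htgw : (t * g).IsWeightedHomogeneous (qhWeight nw mw) d := by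
        have := htw.mul hg
        have heq : d - bg + bg = d := by omega
        rwa [heq] at this
      rw [X_dvd_iff']
      intro α hα h0
      have hwα := wh_eq nw mw (wh_sub nw mw hh htgw) hα
      rw [h0, Nat.mul_zero, Nat.zero_add] at hwα
      have hα1 : α = Finsupp.single 1 j := by
        have hj1 : α 1 = j := by
          have : mw * α 1 = mw * j := by omega
          exact Nat.eq_of_mul_eq_mul_left hmw this
        conv_lhs => rw [fin2_finsupp_eq α]
        rw [h0, hj1]; simp
      apply hα
      rw [hα1]
      have hsplit : Finsupp.single (1 : Fin 2) j
          = Finsupp.single (1 : Fin 2) (j - jb) + Finsupp.single 1 jb := by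
        rw [← Finsupp.single_add]
        congr 1
        omega
      rw [coeff_sub, htdef, hsplit, coeff_monomial_mul, div_mul_cancel₀ _ hc,
        ← hsplit, ← hedef, sub_self]
    · push_neg at hex
      refine ⟨0, isWeightedHomogeneous_zero _ _ _, ?_⟩
      rw [zero_mul, sub_zero, X_dvd_iff']
      intro α hα h0
      have hwα := wh_eq nw mw hh hα
      rw [h0, Nat.mul_zero, Nat.zero_add] at hwα
      have hα1 : α = Finsupp.single 1 (α 1) := by
        conv_lhs => rw [fin2_finsupp_eq α]
        rw [h0]; simp
      apply hα
      rw [hα1]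
      exact hex (α 1) hwα
  obtain ⟨t, htw, h₂, hh₂⟩ := key
  have hX0 : (X 0 : MvPolynomial (Fin 2) K) ≠ 0 := X_ne_zero 0
  have hXw : (X 0 : MvPolynomial (Fin 2) K).IsWeightedHomogeneous (qhWeight nw mw) nw := by
    have := isWeightedHomogeneous_X K (qhWeight nw mw) (0 : Fin 2)
    simpa [qhWeight] using this
  have htgw : (t * g).IsWeightedHomogeneous (qhWeight nw mw) d := by
    have := htw.mul hg
    have heq : d - bg + bg = d := by omega
    rwa [heq] at this
  have hXh : (X 0 * h₂).IsWeightedHomogeneous (qhWeight nw mw) d := by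
    rw [← hh₂]
    exact wh_sub nw mw hh htgw
  refine ⟨t, h₂, htw, homog_of_mul_homog nw mw hX0 hXw hXh, ?_⟩
  rw [← hh₂]
  ring

lemma supp_y_le {f : MvPolynomial (Fin 2) K} {af A : ℕ}
    (hf : f.IsWeightedHomogeneous (qhWeight nw mw) af) (hA : mw * A = af) (hmw : 0 < mw)
    {α : Fin 2 →₀ ℕ} (hα : coeff α f ≠ 0) : α 1 ≤ A := by
  have := wh_eq nw mw hf hα
  by_contra hgt
  push_neg at hgt
  have : mw * (A + 1) ≤ mw * α 1 := Nat.mul_le_mul_left mw hgt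
  rw [Nat.mul_add, Nat.mul_one] at this
  omega

lemma graded_div (hnw : 0 < nw) (hmw : 0 < mw)
    {f : MvPolynomial (Fin 2) K} {af A : ℕ}
    (hf : f.IsWeightedHomogeneous (qhWeight nw mw) af)
    (hA : mw * A = af) (hA1 : 1 ≤ A) (hc : coeff (Finsupp.single 1 A) f ≠ 0) :
    ∀ (k : ℕ) (h : MvPolynomial (Fin 2) K) (d : ℕ), degreeOf 1 h ≤ k →
      h.IsWeightedHomogeneous (qhWeight nw mw) d →
      ∃ q r, q.IsWeightedHomogeneous (qhWeight nw mw) (d - af) ∧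
        r.IsWeightedHomogeneous (qhWeight nw mw) d ∧
        h = q * f + r ∧ ∀ α, coeff α r ≠ 0 → α 1 < A := by
  intro k
  induction k using Nat.strong_induction_on with
  | _ k IHk =>
  intro h d hdeg hh
  by_cases hall : ∀ α, coeff α h ≠ 0 → α 1 < A
  · exact ⟨0, h, isWeightedHomogeneous_zero _ _ _, hh, by ring, hall⟩
  push_neg at hall
  obtain ⟨α, hαne, hαA⟩ := hall
  have hh0 : h ≠ 0 := by
    intro h0; rw [h0, coeff_zero] at hαne; exact hαne rfl
  have hsupp : h.support.Nonempty := by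
    rw [Finset.nonempty_iff_ne_empty]
    intro h0
    exact hh0 (support_eq_empty.mp h0)
  -- the top y-degree is attained
  obtain ⟨β, hβsupp, hβtop⟩ := Finset.exists_mem_eq_sup h.support hsupp (fun s => s 1)
  rw [← degreeOf_eq_sup] at hβtop
  have hβne : coeff β h ≠ 0 := by rwa [mem_support_iff] at hβsupp
  have hαsup : α 1 ≤ degreeOf 1 h := by
    rw [degreeOf_eq_sup]
    exact Finset.le_sup (f := fun m : Fin 2 →₀ ℕ => m 1) (by rwa [mem_support_iff])
  have hAβ : A ≤ β 1 := by omega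
  have hK1 : 1 ≤ k := by omega
  have hwβ := wh_eq nw mw hh hβne
  have hafd : af ≤ d := by
    have : mw * A ≤ mw * β 1 := Nat.mul_le_mul_left mw hAβ
    omega
  set μ : Fin 2 →₀ ℕ := β - Finsupp.single 1 A with hμdef
  have hμ0 : μ 0 = β 0 := by simp [hμdef]
  have hμ1 : μ 1 = β 1 - A := by simp [hμdef]
  set e := coeff β h with hedef
  set c := coeff (Finsupp.single 1 A) f with hcdef
  set t : MvPolynomial (Fin 2) K := monomial μ (e / c) with htdef
  have htw : t.IsWeightedHomogeneous (qhWeight nw mw) (d - af) := by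
    apply isWeightedHomogeneous_monomial
    rw [qh_weight_apply, hμ0, hμ1, Nat.mul_sub]
    have : mw * A ≤ mw * β 1 := Nat.mul_le_mul_left mw hAβ
    omega
  have htfw : (t * f).IsWeightedHomogeneous (qhWeight nw mw) d := by
    have := htw.mul hf
    have heq : d - af + af = d := by omega
    rwa [heq] at this
  set h' := h - t * f with hh'def
  have hwh' : h'.IsWeightedHomogeneous (qhWeight nw mw) d := wh_sub nw mw hh htfw
  have hμβ : μ ≤ β := by
    rw [hμdef]
    exact tsub_le_self
  have hkey : ∀ γ : Fin 2 →₀ ℕ, coeff γ h' ≠ 0 → γ 1 < β 1 := by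
    intro γ hγ
    by_contra hge
    push_neg at hge
    rcases Nat.lt_or_ge (β 1) (γ 1) with hgt | hle
    · -- strictly above the top degree : both coefficients vanish
      have h1 : coeff γ h = 0 := by
        by_contra hne
        have : γ 1 ≤ degreeOf 1 h := by
          rw [degreeOf_eq_sup]
          exact Finset.le_sup (f := fun m : Fin 2 →₀ ℕ => m 1) (by rwa [mem_support_iff])
        omega
      have h2 : coeff γ (t * f) = 0 := by
        rw [htdef, coeff_monomial_mul']
        by_cases hle2 : μ ≤ γ
        · rw [if_pos hle2]
          have : coeff (γ - μ) f = 0 := by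
            by_contra hne
            have := supp_y_le nw mw hf hA hmw hne
            have hγμ : (γ - μ) 1 = γ 1 - μ 1 := by simp
            rw [hγμ, hμ1] at this
            omega
          rw [this, mul_zero]
        · rw [if_neg hle2]
      rw [hh'def, coeff_sub, h1, h2, sub_self] at hγ
      exact hγ rfl
    · -- equal to the top degree : γ = β and the coefficients cancel
      have hγ1 : γ 1 = β 1 := by omega
      have hwγ := wh_eq nw mw hwh' hγ
      have hγ0 : γ 0 = β 0 := by
        have : nw * γ 0 = nw * β 0 := by
          rw [hγ1] at hwγ; omega
        exact Nat.eq_of_mul_eq_mul_left hnw this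
      have hγβ : γ = β := by
        rw [fin2_finsupp_eq γ, fin2_finsupp_eq β, hγ0, hγ1]
      have hβμ : β - μ = Finsupp.single 1 A := by
        ext i
        fin_cases i
        · simp [hμ0]
        · simp only [Finsupp.tsub_apply, hμ1, Finsupp.single_apply]
          norm_num
          omega
      have h2 : coeff β (t * f) = e := by
        rw [htdef, coeff_monomial_mul', if_pos hμβ, hβμ, ← hcdef,
          div_mul_cancel₀ _ hc]
      rw [hγβ, hh'def, coeff_sub, h2, ← hedef, sub_self] at hγ
      exact hγ rfl
  have hdeg' : degreeOf 1 h' ≤ k - 1 := by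
    by_cases h'0 : h' = 0
    · rw [h'0]; simp
    have : degreeOf 1 h' < β 1 := by
      rw [degreeOf_lt_iff (by omega)]
      intro m hm
      exact hkey m (by rwa [mem_support_iff] at hm)
    omega
  obtain ⟨q', r', hq'w, hr'w, heq', hrlt'⟩ := IHk (k - 1) (by omega) h' d hdeg' hwh'
  refine ⟨t + q', r', htw.add hq'w, hr'w, ?_, hrlt'⟩
  rw [hh'def] at heq'
  linear_combination heq'

lemma extract_xpow (hnw : 0 < nw) (hmw : 0 < mw) :
    ∀ (b : ℕ) (r : MvPolynomial (Fin 2) K), r ≠ 0 →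
      r.IsWeightedHomogeneous (qhWeight nw mw) b →
      ∃ (s : ℕ) (r₁ : MvPolynomial (Fin 2) K), r = X 0 ^ s * r₁ ∧ ¬ (X 0 ∣ r₁) ∧
        nw * s ≤ b ∧ r₁.IsWeightedHomogeneous (qhWeight nw mw) (b - nw * s) := by
  intro b
  induction b using Nat.strong_induction_on with
  | _ b IH =>
  intro r hr0 hrb
  by_cases hx : X 0 ∣ r
  · obtain ⟨r₂, hr₂⟩ := hx
    have hX0 : (X 0 : MvPolynomial (Fin 2) K) ≠ 0 := X_ne_zero 0
    have hXw : (X 0 : MvPolynomial (Fin 2) K).IsWeightedHomogeneous (qhWeight nw mw) nw := by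
      have := isWeightedHomogeneous_X K (qhWeight nw mw) (0 : Fin 2)
      simpa [qhWeight] using this
    have hr₂0 : r₂ ≠ 0 := by
      intro h0; rw [h0, mul_zero] at hr₂; exact hr0 hr₂
    have hwr₂ : r₂.IsWeightedHomogeneous (qhWeight nw mw) (b - nw) :=
      homog_of_mul_homog nw mw hX0 hXw (hr₂ ▸ hrb)
    have hnwb : nw ≤ b := le_of_mul_homog nw mw hX0 hr₂0 hXw (hr₂ ▸ hrb)
    obtain ⟨s, r₁, h1, h2, h3, h4⟩ := IH (b - nw) (by omega) r₂ hr₂0 hwr₂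
    refine ⟨s + 1, r₁, ?_, h2, ?_, ?_⟩
    · rw [hr₂, h1]; ring
    · rw [Nat.mul_succ]; omega
    · have heq : b - nw - nw * s = b - nw * (s + 1) := by rw [Nat.mul_succ]; omega
      rwa [heq] at h4
  · exact ⟨0, r, by rw [pow_zero, one_mul], hx, by omega, by simpa using hrb⟩

/-- The statement of the key lemma, as a predicate on the bound `N ≥ af + bg`. -/
def KLP (nw mw : ℕ) (K : Type*) [Field K] (N : ℕ) : Prop :=
  ∀ (f g : MvPolynomial (Fin 2) K) (af bg : ℕ), af + bg ≤ N →
    f ≠ 0 → g ≠ 0 → IsRelPrime f g →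
    f.IsWeightedHomogeneous (qhWeight nw mw) af →
    g.IsWeightedHomogeneous (qhWeight nw mw) bg →
    ∀ (h : MvPolynomial (Fin 2) K) (d : ℕ),
      h.IsWeightedHomogeneous (qhWeight nw mw) d → af + bg ≤ d →
      ∃ u v, u.IsWeightedHomogeneous (qhWeight nw mw) (d - af) ∧
        v.IsWeightedHomogeneous (qhWeight nw mw) (d - bg) ∧ h = u * f + v * g

lemma peel_aux (hnw : 0 < nw) (hmw : 0 < mw) {N : ℕ}
    (IH : ∀ M, M < N → KLP nw mw K M)
    {f g : MvPolynomial (Fin 2) K} {af bg : ℕ} (hN : af + bg ≤ N)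
    (hf0 : f ≠ 0) (hg0 : g ≠ 0) (hcop : IsRelPrime f g)
    (hf : f.IsWeightedHomogeneous (qhWeight nw mw) af)
    (hg : g.IsWeightedHomogeneous (qhWeight nw mw) bg)
    (hxf : X 0 ∣ f) (hxg : ¬ X 0 ∣ g)
    {h : MvPolynomial (Fin 2) K} {d : ℕ}
    (hh : h.IsWeightedHomogeneous (qhWeight nw mw) d) (hd : af + bg ≤ d) :
    ∃ u v, u.IsWeightedHomogeneous (qhWeight nw mw) (d - af) ∧
      v.IsWeightedHomogeneous (qhWeight nw mw) (d - bg) ∧ h = u * f + v * g := by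
  obtain ⟨f₁, hxf'⟩ := hxf
  have hX0 : (X 0 : MvPolynomial (Fin 2) K) ≠ 0 := X_ne_zero 0
  have hXw : (X 0 : MvPolynomial (Fin 2) K).IsWeightedHomogeneous (qhWeight nw mw) nw := by
    have := isWeightedHomogeneous_X K (qhWeight nw mw) (0 : Fin 2)
    simpa [qhWeight] using this
  have hf₁0 : f₁ ≠ 0 := by
    intro h0; rw [h0, mul_zero] at hxf'; exact hf0 hxf'
  have hf₁w : f₁.IsWeightedHomogeneous (qhWeight nw mw) (af - nw) :=
    homog_of_mul_homog nw mw hX0 hXw (hxf' ▸ hf)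
  have hnwaf : nw ≤ af := le_of_mul_homog nw mw hX0 hf₁0 hXw (hxf' ▸ hf)
  obtain ⟨jb, hjb, hcg⟩ := pure_y_of_not_xdvd nw mw hg hxg
  obtain ⟨t, h₂, htw, hh₂w, hstrip⟩ :=
    strip nw mw hnw hmw hg hjb hcg hh (by omega)
  have hcop₁ : IsRelPrime f₁ g := hcop.of_dvd_left ⟨X 0, by rw [hxf']; ring⟩
  obtain ⟨u, v, huw, hvw, heq⟩ :=
    IH (af - nw + bg) (by omega) f₁ g (af - nw) bg le_rfl hf₁0 hg0 hcop₁ hf₁w hg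
      h₂ (d - nw) hh₂w (by omega)
  refine ⟨u, t + X 0 * v, ?_, ?_, ?_⟩
  · have hw : d - nw - (af - nw) = d - af := by omega
    rwa [hw] at huw
  · have hXv := hXw.mul hvw
    have hw : nw + (d - nw - bg) = d - bg := by omega
    rw [hw] at hXv
    exact htw.add hXv
  · rw [hstrip, heq, hxf']
    ring

lemma core_aux (hnw : 0 < nw) (hmw : 0 < mw) {N : ℕ}
    (IH : ∀ M, M < N → KLP nw mw K M)
    {f g : MvPolynomial (Fin 2) K} {af bg : ℕ} (hN : af + bg ≤ N)
    (haf1 : 1 ≤ af) (hab : af ≤ bg)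
    (hf0 : f ≠ 0) (hg0 : g ≠ 0) (hcop : IsRelPrime f g)
    (hf : f.IsWeightedHomogeneous (qhWeight nw mw) af)
    (hg : g.IsWeightedHomogeneous (qhWeight nw mw) bg)
    (hxf : ¬ X 0 ∣ f)
    {h : MvPolynomial (Fin 2) K} {d : ℕ}
    (hh : h.IsWeightedHomogeneous (qhWeight nw mw) d) (hd : af + bg ≤ d) :
    ∃ u v, u.IsWeightedHomogeneous (qhWeight nw mw) (d - af) ∧
      v.IsWeightedHomogeneous (qhWeight nw mw) (d - bg) ∧ h = u * f + v * g := by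
  -- the pure y term of f
  obtain ⟨A, hA, hc⟩ := pure_y_of_not_xdvd nw mw hf hxf
  have hA1 : 1 ≤ A := by
    rcases Nat.eq_zero_or_pos A with h0 | h1
    · rw [h0, Nat.mul_zero] at hA; omega
    · exact h1
  -- divide g by f
  obtain ⟨q, r, hqw, hrw, hdiv, hrlt⟩ :=
    graded_div nw mw hnw hmw hf hA hA1 hc (degreeOf 1 g) g bg le_rfl hg
  have hr : r = g - q * f := by rw [hdiv]; ring
  -- r is nonzero since f is not a unit
  have hr0 : r ≠ 0 := by
    intro h0
    rw [h0, add_zero] at hdiv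
    have : IsUnit f := hcop dvd_rfl ⟨q, by rw [hdiv]; ring⟩
    exact not_isUnit_of_homog_pos nw mw haf1 hf this
  -- X 0 divides r
  have hxr : X 0 ∣ r := by
    rw [X_dvd_iff']
    intro α hα h0
    have hwα := wh_eq nw mw hrw hα
    have h00 : nw * α 0 = 0 := by rw [h0, Nat.mul_zero]
    have hlt := hrlt α hα
    have : mw * (α 1 + 1) ≤ mw * A := Nat.mul_le_mul_left mw (by omega)
    rw [Nat.mul_add, Nat.mul_one] at this
    omega
  -- extract the power of X 0 out of r
  obtain ⟨s, r₁, hex, hxr₁, hsb, hr₁w⟩ := extract_xpow nw mw hnw hmw bg r hr0 hrw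
  have hr₁0 : r₁ ≠ 0 := by
    intro h0; rw [h0, mul_zero] at hex; exact hr0 hex
  have hs1 : 1 ≤ s := by
    rcases Nat.eq_zero_or_pos s with h0 | h1
    · exfalso; rw [h0, pow_zero, one_mul] at hex; rw [hex] at hxr; exact hxr₁ hxr
    · exact h1
  have hnws1 : 1 ≤ nw * s := by
    calc 1 = 1 * 1 := by omega
    _ ≤ nw * s := Nat.mul_le_mul hnw hs1
  have hcop₁ : IsRelPrime f r₁ := by
    intro p hpf hpr₁
    apply hcop hpf
    rw [hr] at hex
    have : p ∣ g - q * f := by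
      rw [hex]; exact Dvd.dvd.mul_left hpr₁ _
    have h2 : p ∣ q * f := Dvd.dvd.mul_left hpf q
    have := dvd_add this h2
    simpa using this
  -- inner induction on the power of X 0
  have INNER : ∀ (s' : ℕ) (h' : MvPolynomial (Fin 2) K) (d' : ℕ),
      h'.IsWeightedHomogeneous (qhWeight nw mw) d' →
      af + (bg - nw * s) + nw * s' ≤ d' →
      ∃ u v, u.IsWeightedHomogeneous (qhWeight nw mw) (d' - af) ∧
        v.IsWeightedHomogeneous (qhWeight nw mw) (d' - (bg - nw * s) - nw * s') ∧
        h' = u * f + v * (X 0 ^ s' * r₁) := by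
    intro s'
    induction s' with
    | zero =>
      intro h' d' hh' hd'
      obtain ⟨u, v, huw, hvw, heq⟩ :=
        IH (af + (bg - nw * s)) (by omega) f r₁ af (bg - nw * s) le_rfl hf0 hr₁0 hcop₁
          hf hr₁w h' d' hh' (by omega)
      refine ⟨u, v, huw, ?_, ?_⟩
      · simpa using hvw
      · rw [pow_zero, one_mul]; exact heq
    | succ s' ihs =>
      intro h' d' hh' hd'
      have hmulsucc : nw * (s' + 1) = nw * s' + nw := Nat.mul_succ nw s'
      obtain ⟨t, h₂, htw, hh₂w, hstrip⟩ :=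
        strip nw mw hnw hmw hf hA hc hh' (by omega)
      obtain ⟨u, v, huw, hvw, heq⟩ := ihs h₂ (d' - nw) hh₂w (by omega)
      refine ⟨t + X 0 * u, v, ?_, ?_, ?_⟩
      · have hXw : (X 0 : MvPolynomial (Fin 2) K).IsWeightedHomogeneous (qhWeight nw mw) nw := by
          have := isWeightedHomogeneous_X K (qhWeight nw mw) (0 : Fin 2)
          simpa [qhWeight] using this
        have hXu := hXw.mul huw
        have hw : nw + (d' - nw - af) = d' - af := by omega
        rw [hw] at hXu
        exact htw.add hXu
      · have hw : d' - nw - (bg - nw * s) - nw * s' = d' - (bg - nw * s) - nw * (s' + 1) := by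
          omega
        rwa [hw] at hvw
      · rw [hstrip, heq]
        ring
  obtain ⟨u, v, huw, hvw, heq⟩ := INNER s h d hh (by omega)
  refine ⟨u - v * q, v, ?_, ?_, ?_⟩
  · have hvq := hvw.mul hqw
    have hw : d - (bg - nw * s) - nw * s = d - bg := by omega
    rw [hw] at hvw hvq
    have hw2 : d - bg + (bg - af) = d - af := by omega
    rw [hw2] at hvq
    exact wh_sub nw mw huw hvq
  · have hw : d - (bg - nw * s) - nw * s = d - bg := by omega
    rwa [hw] at hvw
  · rw [heq, ← hex, hr]
    ring

/-- The key lemma : a quasihomogeneous polynomial of weight `≥ af + bg` lies in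
the ideal generated by coprime quasihomogeneous polynomials of weights `af`, `bg`,
with quasihomogeneous cofactors. -/
lemma KL (hnw : 0 < nw) (hmw : 0 < mw) (N : ℕ) : KLP nw mw K N := by
  induction N using Nat.strong_induction_on with
  | _ N IH =>
  intro f g af bg hN hf0 hg0 hcop hf hg h d hh hd
  have hswap : ∀ (f' g' : MvPolynomial (Fin 2) K) (af' bg' : ℕ),
      (∃ u v, u.IsWeightedHomogeneous (qhWeight nw mw) (d - bg') ∧
        v.IsWeightedHomogeneous (qhWeight nw mw) (d - af') ∧ h = u * g' + v * f') →
      ∃ u v, u.IsWeightedHomogeneous (qhWeight nw mw) (d - af') ∧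
        v.IsWeightedHomogeneous (qhWeight nw mw) (d - bg') ∧ h = u * f' + v * g' := by
    rintro f' g' af' bg' ⟨u, v, h1, h2, h3⟩
    exact ⟨v, u, h2, h1, by rw [h3]; ring⟩
  rcases Nat.eq_zero_or_pos af with haf0 | haf1
  · -- f is a nonzero constant
    subst haf0
    have hC := homog_zero_isC nw mw hnw hmw hf
    have hc0 : coeff 0 f ≠ 0 := by
      intro h0; apply hf0; rw [hC, h0, map_zero]
    refine ⟨C (coeff 0 f)⁻¹ * h, 0, ?_, isWeightedHomogeneous_zero _ _ _, ?_⟩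
    · have := (isWeightedHomogeneous_C (qhWeight nw mw) ((coeff 0 f)⁻¹ : K)).mul hh
      simpa using this
    · rw [zero_mul, add_zero, mul_comm (C (coeff 0 f)⁻¹) h, mul_assoc]
      nth_rewrite 2 [hC]
      rw [← C_mul, inv_mul_cancel₀ hc0, C_1, mul_one]
  rcases Nat.eq_zero_or_pos bg with hbg0 | hbg1
  · -- g is a nonzero constant
    subst hbg0
    apply hswap
    have hC := homog_zero_isC nw mw hnw hmw hg
    have hc0 : coeff 0 g ≠ 0 := by
      intro h0; apply hg0; rw [hC, h0, map_zero]
    refine ⟨C (coeff 0 g)⁻¹ * h, 0, ?_, isWeightedHomogeneous_zero _ _ _, ?_⟩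
    · have := (isWeightedHomogeneous_C (qhWeight nw mw) ((coeff 0 g)⁻¹ : K)).mul hh
      simpa using this
    · rw [zero_mul, add_zero, mul_comm (C (coeff 0 g)⁻¹) h, mul_assoc]
      nth_rewrite 2 [hC]
      rw [← C_mul, inv_mul_cancel₀ hc0, C_1, mul_one]
  have hXw : (X 0 : MvPolynomial (Fin 2) K).IsWeightedHomogeneous (qhWeight nw mw) nw := by
    have := isWeightedHomogeneous_X K (qhWeight nw mw) (0 : Fin 2)
    simpa [qhWeight] using this
  by_cases hxf : X 0 ∣ f <;> by_cases hxg : X 0 ∣ g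
  · exact absurd (hcop hxf hxg) (not_isUnit_of_homog_pos nw mw hnw hXw)
  · exact peel_aux nw mw hnw hmw IH hN hf0 hg0 hcop hf hg hxf hxg hh hd
  · apply hswap
    exact peel_aux nw mw hnw hmw IH (by omega) hg0 hf0 hcop.symm hg hf hxg hxf hh (by omega)
  · rcases le_or_gt af bg with hab | hab
    · exact core_aux nw mw hnw hmw IH hN haf1 hab hf0 hg0 hcop hf hg hxf hh hd
    · apply hswap
      exact core_aux nw mw hnw hmw IH (by omega) hbg1 (by omega) hg0 hf0 hcop.symm hg hf
        hxg hh (by omega)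

/-- the weight-`d` quasihomogeneous part of a power series, as a polynomial -/
def polyComp (d : ℕ) (F : MvPowerSeries (Fin 2) K) : MvPolynomial (Fin 2) K :=
  weightedHomogeneousComponent (qhWeight nw mw) d
    (MvPowerSeries.trunc K (Finsupp.single 0 (d + 1) + Finsupp.single 1 (d + 1)) F)

lemma coeff_polyComp (hnw : 0 < nw) (hmw : 0 < mw) (d : ℕ) (F : MvPowerSeries (Fin 2) K)
    (α : Fin 2 →₀ ℕ) :
    MvPolynomial.coeff α (polyComp nw mw d F)
      = if nw * α 0 + mw * α 1 = d then MvPowerSeries.coeff α F else 0 := by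
  rw [polyComp, coeff_weightedHomogeneousComponent, MvPowerSeries.coeff_trunc, qh_weight_apply]
  by_cases h : nw * α 0 + mw * α 1 = d
  · rw [if_pos h, if_pos h, if_pos]
    have h0 : α 0 ≤ d := by
      have := Nat.le_mul_of_pos_left (α 0) hnw; omega
    have h1 : α 1 ≤ d := by
      have := Nat.le_mul_of_pos_left (α 1) hmw; omega
    constructor
    · intro i
      fin_cases i <;> simp [Finsupp.single_apply] <;> omega
    · intro hcon
      have := hcon 0
      simp [Finsupp.single_apply] at this
      omega
  · rw [if_neg h, if_neg h]

lemma polyComp_isWH (d : ℕ) (F : MvPowerSeries (Fin 2) K) :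
    (polyComp nw mw d F).IsWeightedHomogeneous (qhWeight nw mw) d :=
  weightedHomogeneousComponent_isWeightedHomogeneous d _

lemma polyComp_zero (d : ℕ) : polyComp nw mw d (0 : MvPowerSeries (Fin 2) K) = 0 := by
  rw [polyComp, map_zero, map_zero]

lemma coe_poly_inj {p q : MvPolynomial (Fin 2) K}
    (h : (p : MvPowerSeries (Fin 2) K) = (q : MvPowerSeries (Fin 2) K)) : p = q := by
  apply MvPolynomial.ext
  intro m
  have := congrArg (MvPowerSeries.coeff m) h
  rwa [MvPolynomial.coeff_coe, MvPolynomial.coeff_coe] at this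

lemma coeff_qhComponent (d : ℕ) (F : MvPowerSeries (Fin 2) K) (α : Fin 2 →₀ ℕ) :
    MvPowerSeries.coeff α (qhComponent K nw mw d F)
      = if nw * α 0 + mw * α 1 = d then MvPowerSeries.coeff α F else 0 := rfl

lemma qhComponent_eq_coe (hnw : 0 < nw) (hmw : 0 < mw) (d : ℕ) (F : MvPowerSeries (Fin 2) K) :
    qhComponent K nw mw d F = ((polyComp nw mw d F : MvPolynomial (Fin 2) K)
      : MvPowerSeries (Fin 2) K) := by
  apply MvPowerSeries.ext
  intro α
  rw [MvPolynomial.coeff_coe, coeff_polyComp nw mw hnw hmw, coeff_qhComponent]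

/-- the power series built out of a sequence of quasihomogeneous polynomials of
increasing weights -/
def seriesOf (aw : ℕ) (u : ℕ → MvPolynomial (Fin 2) K) : MvPowerSeries (Fin 2) K :=
  fun α => if aw ≤ nw * α 0 + mw * α 1
    then MvPolynomial.coeff α (u (nw * α 0 + mw * α 1 - aw)) else 0

lemma coeff_seriesOf (aw : ℕ) (u : ℕ → MvPolynomial (Fin 2) K) (α : Fin 2 →₀ ℕ) :
    MvPowerSeries.coeff α (seriesOf nw mw aw u)
      = if aw ≤ nw * α 0 + mw * α 1
        then MvPolynomial.coeff α (u (nw * α 0 + mw * α 1 - aw)) else 0 := rfl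

lemma polyComp_seriesOf (hnw : 0 < nw) (hmw : 0 < mw) (aw : ℕ)
    (u : ℕ → MvPolynomial (Fin 2) K)
    (hu : ∀ k, (u k).IsWeightedHomogeneous (qhWeight nw mw) (aw + k)) (d : ℕ) :
    polyComp nw mw d (seriesOf nw mw aw u) = if aw ≤ d then u (d - aw) else 0 := by
  apply MvPolynomial.ext
  intro α
  rw [coeff_polyComp nw mw hnw hmw, coeff_seriesOf]
  by_cases hw : nw * α 0 + mw * α 1 = d
  · rw [if_pos hw, hw]
    by_cases had : aw ≤ d
    · rw [if_pos had, if_pos had]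
    · rw [if_neg had, if_neg had, coeff_zero]
  · rw [if_neg hw]
    by_cases had : aw ≤ d
    · rw [if_pos had]
      symm
      by_contra hne
      have := wh_eq nw mw (hu (d - aw)) hne
      omega
    · rw [if_neg had, coeff_zero]

open Classical in
/-- choose quasihomogeneous cofactors, when they exist -/
def qhSolve (fa gb : MvPolynomial (Fin 2) K) (aw bw : ℕ) (P : MvPolynomial (Fin 2) K) :
    MvPolynomial (Fin 2) K × MvPolynomial (Fin 2) K :=
  if H : ∃ uv : MvPolynomial (Fin 2) K × MvPolynomial (Fin 2) K,
      P = uv.1 * gb + uv.2 * fa ∧ uv.1.IsWeightedHomogeneous (qhWeight nw mw) aw ∧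
        uv.2.IsWeightedHomogeneous (qhWeight nw mw) bw
  then H.choose else 0

lemma qhSolve_spec {fa gb : MvPolynomial (Fin 2) K} {aw bw : ℕ} {P : MvPolynomial (Fin 2) K}
    (H : ∃ uv : MvPolynomial (Fin 2) K × MvPolynomial (Fin 2) K,
      P = uv.1 * gb + uv.2 * fa ∧ uv.1.IsWeightedHomogeneous (qhWeight nw mw) aw ∧
        uv.2.IsWeightedHomogeneous (qhWeight nw mw) bw) :
    P = (qhSolve nw mw fa gb aw bw P).1 * gb + (qhSolve nw mw fa gb aw bw P).2 * fa ∧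
      (qhSolve nw mw fa gb aw bw P).1.IsWeightedHomogeneous (qhWeight nw mw) aw ∧
      (qhSolve nw mw fa gb aw bw P).2.IsWeightedHomogeneous (qhWeight nw mw) bw := by
  rw [qhSolve, dif_pos H]
  exact H.choose_spec

/-- the recursively constructed quasihomogeneous pieces of the factors -/
def uvSeq (fa gb : MvPolynomial (Fin 2) K) (a b : ℕ) (F : MvPowerSeries (Fin 2) K) :
    ℕ → MvPolynomial (Fin 2) K × MvPolynomial (Fin 2) K
  | 0 => (fa, gb)
  | (k + 1) =>
      qhSolve nw mw fa gb (a + (k + 1)) (b + (k + 1))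
        (polyComp nw mw (a + b + (k + 1)) F
          - ∑ i ∈ (Finset.Ioo 0 (k + 1)).attach,
              (uvSeq fa gb a b F i.1).1 * (uvSeq fa gb a b F (k + 1 - i.1)).2)
  termination_by k => k
  decreasing_by
  · exact (Finset.mem_Ioo.mp i.2).2
  · have := Finset.mem_Ioo.mp i.2; omega

lemma sum_range_split {M : Type*} [AddCommMonoid M] (k : ℕ) (hk : 1 ≤ k) (f : ℕ → M) :
    ∑ i ∈ Finset.range (k + 1), f i
      = f 0 + (∑ i ∈ (Finset.Ioo 0 k).attach, f i.1) + f k := by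
  rw [Finset.sum_attach (Finset.Ioo 0 k) f, Finset.sum_range_succ]
  congr 1
  have hr : Finset.range k = insert 0 (Finset.Ioo 0 k) := by
    ext x
    simp only [Finset.mem_range, Finset.mem_insert, Finset.mem_Ioo]
    omega
  rw [hr, Finset.sum_insert (by simp)]

lemma uvSeq_spec (hnw : 0 < nw) (hmw : 0 < mw) {fa gb : MvPolynomial (Fin 2) K} {a b : ℕ}
    (hfa0 : fa ≠ 0) (hgb0 : gb ≠ 0) (hcop : IsRelPrime fa gb)
    (hfa : fa.IsWeightedHomogeneous (qhWeight nw mw) a)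
    (hgb : gb.IsWeightedHomogeneous (qhWeight nw mw) b) (F : MvPowerSeries (Fin 2) K) :
    ∀ k, ((uvSeq nw mw fa gb a b F k).1.IsWeightedHomogeneous (qhWeight nw mw) (a + k)
        ∧ (uvSeq nw mw fa gb a b F k).2.IsWeightedHomogeneous (qhWeight nw mw) (b + k))
      ∧ (1 ≤ k → polyComp nw mw (a + b + k) F
          = (∑ i ∈ (Finset.Ioo 0 k).attach,
              (uvSeq nw mw fa gb a b F i.1).1 * (uvSeq nw mw fa gb a b F (k - i.1)).2)
            + ((uvSeq nw mw fa gb a b F k).1 * gb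
                + (uvSeq nw mw fa gb a b F k).2 * fa)) := by
  intro k
  induction k using Nat.strong_induction_on with
  | _ k IH =>
  match k with
  | 0 =>
    have h00 : uvSeq nw mw fa gb a b F 0 = (fa, gb) := by rw [uvSeq]
    refine ⟨⟨?_, ?_⟩, by omega⟩
    · rw [h00]; simpa using hfa
    · rw [h00]; simpa using hgb
  | (k + 1) =>
    set P : MvPolynomial (Fin 2) K :=
      polyComp nw mw (a + b + (k + 1)) F
        - ∑ i ∈ (Finset.Ioo 0 (k + 1)).attach,
            (uvSeq nw mw fa gb a b F i.1).1 * (uvSeq nw mw fa gb a b F (k + 1 - i.1)).2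
      with hPdef
    have hPw : P.IsWeightedHomogeneous (qhWeight nw mw) (a + b + (k + 1)) := by
      apply wh_sub
      · exact polyComp_isWH nw mw _ F
      · apply IsWeightedHomogeneous.sum
        intro i _
        have hi := Finset.mem_Ioo.mp i.2
        have h1 := (IH i.1 (by omega)).1.1
        have h2 := (IH (k + 1 - i.1) (by omega)).1.2
        have h3 := h1.mul h2
        have he : a + i.1 + (b + (k + 1 - i.1)) = a + b + (k + 1) := by omega
        rwa [he] at h3
    have H : ∃ uv : MvPolynomial (Fin 2) K × MvPolynomial (Fin 2) K,
        P = uv.1 * gb + uv.2 * fa ∧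
          uv.1.IsWeightedHomogeneous (qhWeight nw mw) (a + (k + 1)) ∧
          uv.2.IsWeightedHomogeneous (qhWeight nw mw) (b + (k + 1)) := by
      obtain ⟨u, v, huw, hvw, heq⟩ :=
        KL nw mw hnw hmw (a + b + (k + 1)) gb fa b a (by omega) hgb0 hfa0 hcop.symm hgb hfa
          P (a + b + (k + 1)) hPw (by omega)
      refine ⟨(u, v), heq, ?_, ?_⟩
      · have he : a + b + (k + 1) - b = a + (k + 1) := by omega
        rwa [he] at huw
      · have he : a + b + (k + 1) - a = b + (k + 1) := by omega
        rwa [he] at hvw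
    have hun : uvSeq nw mw fa gb a b F (k + 1)
        = qhSolve nw mw fa gb (a + (k + 1)) (b + (k + 1)) P := by
      rw [uvSeq]
    obtain ⟨heq, hu, hv⟩ := qhSolve_spec nw mw H
    refine ⟨⟨by rw [hun]; exact hu, by rw [hun]; exact hv⟩, fun _ => ?_⟩
    rw [hun]
    rw [hPdef] at heq
    linear_combination heq

lemma wh_coeff_zero {f : MvPolynomial (Fin 2) K} {af : ℕ}
    (hf : f.IsWeightedHomogeneous (qhWeight nw mw) af) (α : Fin 2 →₀ ℕ)
    (hne : nw * α 0 + mw * α 1 ≠ af) : MvPolynomial.coeff α f = 0 := by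
  by_contra h0
  exact hne (wh_eq nw mw hf h0)

lemma uvSeq_R (hnw : 0 < nw) (hmw : 0 < mw) {fa gb : MvPolynomial (Fin 2) K} {a b : ℕ}
    (hfa0 : fa ≠ 0) (hgb0 : gb ≠ 0) (hcop : IsRelPrime fa gb)
    (hfa : fa.IsWeightedHomogeneous (qhWeight nw mw) a)
    (hgb : gb.IsWeightedHomogeneous (qhWeight nw mw) b) {F : MvPowerSeries (Fin 2) K}
    (hinit' : polyComp nw mw (a + b) F = fa * gb) :
    ∀ k, polyComp nw mw (a + b + k) F
      = ∑ i ∈ Finset.range (k + 1),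
          (uvSeq nw mw fa gb a b F i).1 * (uvSeq nw mw fa gb a b F (k - i)).2 := by
  intro k
  have h00 : uvSeq nw mw fa gb a b F 0 = (fa, gb) := by rw [uvSeq]
  rcases Nat.eq_zero_or_pos k with rfl | hk
  · simpa [h00] using hinit'
  · have hspec := (uvSeq_spec nw mw hnw hmw hfa0 hgb0 hcop hfa hgb F k).2 hk
    rw [sum_range_split k hk, hspec, h00]
    simp only [Nat.sub_zero, Nat.sub_self, h00]
    ring

lemma series_factorization (hnw : 0 < nw) (hmw : 0 < mw)
    {fa gb : MvPolynomial (Fin 2) K} {a b : ℕ}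
    (hfa0 : fa ≠ 0) (hgb0 : gb ≠ 0) (hcop : IsRelPrime fa gb)
    (hfa : fa.IsWeightedHomogeneous (qhWeight nw mw) a)
    (hgb : gb.IsWeightedHomogeneous (qhWeight nw mw) b) {F : MvPowerSeries (Fin 2) K}
    (hlow' : ∀ d, d < a + b → polyComp nw mw d F = 0)
    (hinit' : polyComp nw mw (a + b) F = fa * gb) :
    F = seriesOf nw mw a (fun k => (uvSeq nw mw fa gb a b F k).1)
        * seriesOf nw mw b (fun k => (uvSeq nw mw fa gb a b F k).2) := by
  have hu : ∀ k, (uvSeq nw mw fa gb a b F k).1.IsWeightedHomogeneous (qhWeight nw mw) (a + k) :=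
    fun k => (uvSeq_spec nw mw hnw hmw hfa0 hgb0 hcop hfa hgb F k).1.1
  have hv : ∀ k, (uvSeq nw mw fa gb a b F k).2.IsWeightedHomogeneous (qhWeight nw mw) (b + k) :=
    fun k => (uvSeq_spec nw mw hnw hmw hfa0 hgb0 hcop hfa hgb F k).1.2
  apply MvPowerSeries.ext
  intro α
  rw [MvPowerSeries.coeff_mul]
  by_cases hd : a + b ≤ nw * α 0 + mw * α 1
  · set k := nw * α 0 + mw * α 1 - (a + b) with hkdef
    have hF : MvPowerSeries.coeff α F
        = MvPolynomial.coeff α (polyComp nw mw (a + b + k) F) := by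
      rw [coeff_polyComp nw mw hnw hmw, if_pos (by omega)]
    rw [hF, uvSeq_R nw mw hnw hmw hfa0 hgb0 hcop hfa hgb hinit' k, MvPolynomial.coeff_sum]
    have hexp : ∀ i ∈ Finset.range (k + 1),
        MvPolynomial.coeff α
          ((uvSeq nw mw fa gb a b F i).1 * (uvSeq nw mw fa gb a b F (k - i)).2)
        = ∑ x ∈ Finset.HasAntidiagonal.antidiagonal α,
            MvPolynomial.coeff x.1 (uvSeq nw mw fa gb a b F i).1
              * MvPolynomial.coeff x.2 (uvSeq nw mw fa gb a b F (k - i)).2 :=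
      fun i _ => MvPolynomial.coeff_mul _ _ _
  -- swap the two summations
    rw [Finset.sum_congr rfl hexp, Finset.sum_comm]
    apply Finset.sum_congr rfl
    intro x hx
    have hxa : x.1 + x.2 = α := Finset.HasAntidiagonal.mem_antidiagonal.mp hx
    have hadd0 : x.1 0 + x.2 0 = α 0 := by rw [← hxa]; simp
    have hadd1 : x.1 1 + x.2 1 = α 1 := by rw [← hxa]; simp
    have e0 : nw * α 0 = nw * x.1 0 + nw * x.2 0 := by rw [← hadd0, Nat.mul_add]
    have e1 : mw * α 1 = mw * x.1 1 + mw * x.2 1 := by rw [← hadd1, Nat.mul_add]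
    rw [coeff_seriesOf, coeff_seriesOf]
    set wβ := nw * x.1 0 + mw * x.1 1 with hwβ
    set wγ := nw * x.2 0 + mw * x.2 1 with hwγ
    have hsum : wβ + wγ = a + b + k := by omega
    by_cases hc1 : a ≤ wβ
    · by_cases hc2 : wβ ≤ a + k
      · have hones : (∑ i ∈ Finset.range (k + 1),
            MvPolynomial.coeff x.1 (uvSeq nw mw fa gb a b F i).1
              * MvPolynomial.coeff x.2 (uvSeq nw mw fa gb a b F (k - i)).2)
            = MvPolynomial.coeff x.1 (uvSeq nw mw fa gb a b F (wβ - a)).1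
              * MvPolynomial.coeff x.2 (uvSeq nw mw fa gb a b F (k - (wβ - a))).2 := by
          apply Finset.sum_eq_single_of_mem (wβ - a) (Finset.mem_range.mpr (by omega))
          intro i _ hne
          rw [wh_coeff_zero nw mw (hu i) x.1 (by omega), zero_mul]
        rw [hones, if_pos hc1, if_pos (show b ≤ wγ by omega)]
        have harith : k - (wβ - a) = wγ - b := by omega
        rw [harith]
      · rw [if_neg (show ¬ b ≤ wγ by omega), mul_zero]
        apply Finset.sum_eq_zero
        intro i hi
        have hik : i ≤ k := by have := Finset.mem_range.mp hi; omega
        rw [wh_coeff_zero nw mw (hu i) x.1 (by omega), zero_mul]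
    · rw [if_neg hc1, zero_mul]
      apply Finset.sum_eq_zero
      intro i _
      rw [wh_coeff_zero nw mw (hu i) x.1 (by omega), zero_mul]
  · have hF : MvPowerSeries.coeff α F = 0 := by
      have h1 := hlow' (nw * α 0 + mw * α 1) (by omega)
      have h2 := congrArg (MvPolynomial.coeff α) h1
      rw [coeff_polyComp nw mw hnw hmw, if_pos rfl] at h2
      simpa using h2
    rw [hF]
    symm
    apply Finset.sum_eq_zero
    intro x hx
    have hxa : x.1 + x.2 = α := Finset.HasAntidiagonal.mem_antidiagonal.mp hx
    have hadd0 : x.1 0 + x.2 0 = α 0 := by rw [← hxa]; simp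
    have hadd1 : x.1 1 + x.2 1 = α 1 := by rw [← hxa]; simp
    have e0 : nw * α 0 = nw * x.1 0 + nw * x.2 0 := by rw [← hadd0, Nat.mul_add]
    have e1 : mw * α 1 = mw * x.1 1 + mw * x.2 1 := by rw [← hadd1, Nat.mul_add]
    rw [coeff_seriesOf, coeff_seriesOf]
    by_cases hc1 : a ≤ nw * x.1 0 + mw * x.1 1
    · rw [if_neg (show ¬ b ≤ nw * x.2 0 + mw * x.2 1 by omega), mul_zero]
    · rw [if_neg hc1, zero_mul]

lemma exists_ord (hnw : 0 < nw) (hmw : 0 < mw) {p : MvPowerSeries (Fin 2) K} (hp : p ≠ 0) :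
    ∃ dp, polyComp nw mw dp p ≠ 0 ∧ ∀ e, e < dp → polyComp nw mw e p = 0 := by
  classical
  have hex : ∃ d, polyComp nw mw d p ≠ 0 := by
    by_contra hall
    push_neg at hall
    apply hp
    apply MvPowerSeries.ext
    intro α
    have h1 := congrArg (MvPolynomial.coeff α) (hall (nw * α 0 + mw * α 1))
    rw [coeff_polyComp nw mw hnw hmw, if_pos rfl] at h1
    simpa using h1
  exact ⟨Nat.find hex, Nat.find_spec hex, fun e he => by
    have := Nat.find_min hex he
    simpa using this⟩

lemma ord_le_of_coeff_ne (hnw : 0 < nw) (hmw : 0 < mw) {p : MvPowerSeries (Fin 2) K} {dp : ℕ}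
    (hmin : ∀ e, e < dp → polyComp nw mw e p = 0)
    {β : Fin 2 →₀ ℕ} (hβ : MvPowerSeries.coeff β p ≠ 0) : dp ≤ nw * β 0 + mw * β 1 := by
  by_contra hlt
  push_neg at hlt
  have h1 := congrArg (MvPolynomial.coeff β) (hmin _ hlt)
  rw [coeff_polyComp nw mw hnw hmw, if_pos rfl] at h1
  simp only [MvPolynomial.coeff_zero] at h1
  exact hβ h1

lemma mul_init (hnw : 0 < nw) (hmw : 0 < mw) {p q : MvPowerSeries (Fin 2) K} {dp dq : ℕ}
    (hpmin : ∀ e, e < dp → polyComp nw mw e p = 0)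
    (hqmin : ∀ e, e < dq → polyComp nw mw e q = 0) :
    (∀ e, e < dp + dq → polyComp nw mw e (p * q) = 0) ∧
      polyComp nw mw (dp + dq) (p * q) = polyComp nw mw dp p * polyComp nw mw dq q := by
  constructor
  · intro e he
    apply MvPolynomial.ext
    intro α
    rw [coeff_polyComp nw mw hnw hmw, MvPolynomial.coeff_zero]
    by_cases hw : nw * α 0 + mw * α 1 = e
    · rw [if_pos hw, MvPowerSeries.coeff_mul]
      apply Finset.sum_eq_zero
      intro x hx
      have hxa : x.1 + x.2 = α := Finset.HasAntidiagonal.mem_antidiagonal.mp hx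
      have hadd0 : x.1 0 + x.2 0 = α 0 := by rw [← hxa]; simp
      have hadd1 : x.1 1 + x.2 1 = α 1 := by rw [← hxa]; simp
      have e0 : nw * α 0 = nw * x.1 0 + nw * x.2 0 := by rw [← hadd0, Nat.mul_add]
      have e1 : mw * α 1 = mw * x.1 1 + mw * x.2 1 := by rw [← hadd1, Nat.mul_add]
      by_cases h1 : MvPowerSeries.coeff x.1 p = 0
      · rw [h1, zero_mul]
      · have hw1 := ord_le_of_coeff_ne nw mw hnw hmw hpmin h1
        have h2 : MvPowerSeries.coeff x.2 q = 0 := by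
          by_contra h2
          have hw2 := ord_le_of_coeff_ne nw mw hnw hmw hqmin h2
          omega
        rw [h2, mul_zero]
    · rw [if_neg hw]
  · apply MvPolynomial.ext
    intro α
    rw [coeff_polyComp nw mw hnw hmw, MvPolynomial.coeff_mul]
    by_cases hw : nw * α 0 + mw * α 1 = dp + dq
    · rw [if_pos hw, MvPowerSeries.coeff_mul]
      apply Finset.sum_congr rfl
      intro x hx
      have hxa : x.1 + x.2 = α := Finset.HasAntidiagonal.mem_antidiagonal.mp hx
      have hadd0 : x.1 0 + x.2 0 = α 0 := by rw [← hxa]; simp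
      have hadd1 : x.1 1 + x.2 1 = α 1 := by rw [← hxa]; simp
      have e0 : nw * α 0 = nw * x.1 0 + nw * x.2 0 := by rw [← hadd0, Nat.mul_add]
      have e1 : mw * α 1 = mw * x.1 1 + mw * x.2 1 := by rw [← hadd1, Nat.mul_add]
      rw [coeff_polyComp nw mw hnw hmw, coeff_polyComp nw mw hnw hmw]
      by_cases h1 : MvPowerSeries.coeff x.1 p = 0
      · rw [h1, zero_mul]
        split_ifs <;> simp [h1]
      · have hw1 := ord_le_of_coeff_ne nw mw hnw hmw hpmin h1
        by_cases h2 : MvPowerSeries.coeff x.2 q = 0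
        · rw [h2, mul_zero]
          split_ifs <;> simp [h2]
        · have hw2 := ord_le_of_coeff_ne nw mw hnw hmw hqmin h2
          rw [if_pos (by omega), if_pos (by omega)]
    · rw [if_neg hw]
      symm
      apply Finset.sum_eq_zero
      intro x hx
      have hxa : x.1 + x.2 = α := Finset.HasAntidiagonal.mem_antidiagonal.mp hx
      have hadd0 : x.1 0 + x.2 0 = α 0 := by rw [← hxa]; simp
      have hadd1 : x.1 1 + x.2 1 = α 1 := by rw [← hxa]; simp
      have e0 : nw * α 0 = nw * x.1 0 + nw * x.2 0 := by rw [← hadd0, Nat.mul_add]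
      have e1 : mw * α 1 = mw * x.1 1 + mw * x.2 1 := by rw [← hadd1, Nat.mul_add]
      rw [coeff_polyComp nw mw hnw hmw, coeff_polyComp nw mw hnw hmw]
      by_cases hc1 : nw * x.1 0 + mw * x.1 1 = dp
      · rw [if_pos hc1, if_neg (by omega), mul_zero]
      · rw [if_neg hc1, zero_mul]

lemma irreducible_series (hnw : 0 < nw) (hmw : 0 < mw) {fa : MvPolynomial (Fin 2) K} {a : ℕ}
    (hfa : fa.IsWeightedHomogeneous (qhWeight nw mw) a) (hIrr : Irreducible fa)
    {f : MvPowerSeries (Fin 2) K}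
    (hflow : ∀ d, d < a → polyComp nw mw d f = 0)
    (hfinit : polyComp nw mw a f = fa) : Irreducible f := by
  have hfa0 : fa ≠ 0 := hIrr.ne_zero
  have ha1 : 1 ≤ a := by
    by_contra h0
    push_neg at h0
    have ha : a = 0 := by omega
    subst ha
    have hC := homog_zero_isC nw mw hnw hmw hfa
    have hc0 : MvPolynomial.coeff 0 fa ≠ 0 := fun h => hfa0 (by rw [hC, h, map_zero])
    exact hIrr.not_isUnit (hC ▸ ((isUnit_iff_ne_zero.mpr hc0).map MvPolynomial.C))
  constructor
  · rw [MvPowerSeries.isUnit_iff_constantCoeff]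
    have h1 := hflow 0 (by omega)
    have h2 := congrArg (MvPolynomial.coeff (0 : Fin 2 →₀ ℕ)) h1
    rw [coeff_polyComp nw mw hnw hmw, MvPolynomial.coeff_zero, if_pos (by simp)] at h2
    rw [← MvPowerSeries.coeff_zero_eq_constantCoeff_apply, h2]
    simp
  · intro p q hpq
    have hf0 : f ≠ 0 := by
      intro h0
      rw [h0, polyComp_zero] at hfinit
      exact hfa0 hfinit.symm
    have hp0 : p ≠ 0 := by intro h0; rw [h0, zero_mul] at hpq; exact hf0 hpq
    have hq0 : q ≠ 0 := by intro h0; rw [h0, mul_zero] at hpq; exact hf0 hpq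
    obtain ⟨dp, hdp, hpmin⟩ := exists_ord nw mw hnw hmw hp0
    obtain ⟨dq, hdq, hqmin⟩ := exists_ord nw mw hnw hmw hq0
    obtain ⟨hmulmin, hmulinit⟩ := mul_init nw mw hnw hmw hpmin hqmin
    have hsum : dp + dq = a := by
      rcases lt_trichotomy (dp + dq) a with h | h | h
      · exfalso
        have h1 := hflow (dp + dq) h
        rw [hpq, hmulinit] at h1
        exact mul_ne_zero hdp hdq h1
      · exact h
      · exfalso
        have h1 := hmulmin a h
        rw [← hpq] at h1
        rw [h1] at hfinit
        exact hfa0 hfinit.symm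
    have hfact : fa = polyComp nw mw dp p * polyComp nw mw dq q := by
      rw [← hmulinit, ← hpq, hsum, hfinit]
    have hPp := polyComp_isWH nw mw dp p
    have hPq := polyComp_isWH nw mw dq q
    rcases hIrr.isUnit_or_isUnit hfact with hu | hu
    · left
      have hdp0 : dp = 0 := by
        by_contra h0
        exact not_isUnit_of_homog_pos nw mw (by omega) hPp hu
      rw [MvPowerSeries.isUnit_iff_constantCoeff]
      apply isUnit_iff_ne_zero.mpr
      intro hc
      apply hdp
      rw [hdp0]
      apply MvPolynomial.ext
      intro α
      rw [coeff_polyComp nw mw hnw hmw, MvPolynomial.coeff_zero]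
      by_cases hw : nw * α 0 + mw * α 1 = 0
      · rw [if_pos hw]
        have h0 : α 0 = 0 := by
          rcases Nat.mul_eq_zero.mp (show nw * α 0 = 0 by omega) with h | h
          · omega
          · exact h
        have h1 : α 1 = 0 := by
          rcases Nat.mul_eq_zero.mp (show mw * α 1 = 0 by omega) with h | h
          · omega
          · exact h
        have hα : α = 0 := by rw [fin2_finsupp_eq α, h0, h1]; simp
        rw [hα, MvPowerSeries.coeff_zero_eq_constantCoeff_apply, hc]
      · rw [if_neg hw]
    · right
      have hdq0 : dq = 0 := by
        by_contra h0
        exact not_isUnit_of_homog_pos nw mw (by omega) hPq hu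
      rw [MvPowerSeries.isUnit_iff_constantCoeff]
      apply isUnit_iff_ne_zero.mpr
      intro hc
      apply hdq
      rw [hdq0]
      apply MvPolynomial.ext
      intro α
      rw [coeff_polyComp nw mw hnw hmw, MvPolynomial.coeff_zero]
      by_cases hw : nw * α 0 + mw * α 1 = 0
      · rw [if_pos hw]
        have h0 : α 0 = 0 := by
          rcases Nat.mul_eq_zero.mp (show nw * α 0 = 0 by omega) with h | h
          · omega
          · exact h
        have h1 : α 1 = 0 := by
          rcases Nat.mul_eq_zero.mp (show mw * α 1 = 0 by omega) with h | h
          · omega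
          · exact h
        have hα : α = 0 := by rw [fin2_finsupp_eq α, h0, h1]; simp
        rw [hα, MvPowerSeries.coeff_zero_eq_constantCoeff_apply, hc]
      · rw [if_neg hw]

lemma qhComponent_coe (hnw : 0 < nw) (hmw : 0 < mw) {p : MvPolynomial (Fin 2) K} {d : ℕ}
    (hp : p.IsWeightedHomogeneous (qhWeight nw mw) d) :
    qhComponent K nw mw d ((p : MvPowerSeries (Fin 2) K)) = (p : MvPowerSeries (Fin 2) K) := by
  apply MvPowerSeries.ext
  intro α
  rw [coeff_qhComponent, MvPolynomial.coeff_coe]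
  split_ifs with hw
  · rfl
  · exact (wh_coeff_zero nw mw hp α hw).symm
end KLpart


/-- Lemma A1 of Artal–et al.: if the initial `ω`-quasihomogeneous form of `F` factors as
`f_a·g_b` with `f_a`, `g_b` quasihomogeneous and coprime, then `F = f·g` with
`f = f_a + (higher weight)`, `g = g_b + (higher weight)`; moreover if `f_a` is
an irreducible polynomial, then `f` is an irreducible power series. -/
theorem quasihomogeneous_factorization {K : Type*} [Field K] (nw mw : ℕ)
    (hnw : 0 < nw) (hmw : 0 < mw)
    (F : MvPowerSeries (Fin 2) K) (hF : F ≠ 0) (a b : ℕ)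
    (fa gb : MvPolynomial (Fin 2) K)
    (hfa : fa.IsWeightedHomogeneous (qhWeight nw mw) a)
    (hgb : gb.IsWeightedHomogeneous (qhWeight nw mw) b)
    (hlow : ∀ d : ℕ, d < a + b → qhComponent K nw mw d F = 0)
    (hinit : qhComponent K nw mw (a + b) F
      = ((fa * gb : MvPolynomial (Fin 2) K) : MvPowerSeries (Fin 2) K))
    (hcop : IsRelPrime fa gb) :
    ∃ f g : MvPowerSeries (Fin 2) K, F = f * g ∧
      (∀ d : ℕ, d < a → qhComponent K nw mw d f = 0) ∧
      qhComponent K nw mw a f = ((fa : MvPolynomial (Fin 2) K) : MvPowerSeries (Fin 2) K) ∧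
      (∀ d : ℕ, d < b → qhComponent K nw mw d g = 0) ∧
      qhComponent K nw mw b g = ((gb : MvPolynomial (Fin 2) K) : MvPowerSeries (Fin 2) K) ∧
      (Irreducible fa → Irreducible f) := by
  by_cases hfa0 : fa = 0
  · subst hfa0
    have hgbu : IsUnit gb := hcop (dvd_zero gb) dvd_rfl
    have hgb0 : gb ≠ 0 := hgbu.ne_zero
    have hb0 : b = 0 := by
      by_contra hb
      exact not_isUnit_of_homog_pos nw mw (by omega) hgb hgbu
    subst hb0
    have hC := homog_zero_isC nw mw hnw hmw hgb
    have hc0 : MvPolynomial.coeff 0 gb ≠ 0 := fun h => hgb0 (by rw [hC, h, map_zero])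
    have hgbC : (gb : MvPowerSeries (Fin 2) K)
        = MvPowerSeries.C (σ := Fin 2) (R := K) (MvPolynomial.coeff 0 gb) := by
      conv_lhs => rw [hC]
      exact MvPolynomial.coe_C _
    refine ⟨MvPowerSeries.C (σ := Fin 2) (R := K) (MvPolynomial.coeff 0 gb)⁻¹ * F,
      (gb : MvPowerSeries (Fin 2) K), ?_, ?_, ?_, ?_, ?_, ?_⟩
    · rw [hgbC, mul_comm (MvPowerSeries.C (σ := Fin 2) (R := K) (MvPolynomial.coeff 0 gb)⁻¹) F,
        mul_assoc, ← map_mul, inv_mul_cancel₀ hc0, map_one, mul_one]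
    · intro d hda
      apply MvPowerSeries.ext
      intro α
      have hz : MvPowerSeries.coeff α (0 : MvPowerSeries (Fin 2) K) = 0 := map_zero _
      rw [coeff_qhComponent, hz]
      split_ifs with hw
      · rw [MvPowerSeries.coeff_C_mul]
        have hF0 := hlow d (by omega)
        have h3 := congrArg (MvPowerSeries.coeff α) hF0
        rw [coeff_qhComponent, if_pos hw, hz] at h3
        rw [h3, mul_zero]
      · rfl
    · have hF0 : qhComponent K nw mw a F = 0 := by
        have h4 := hinit
        rw [zero_mul] at h4
        simpa using h4
      apply MvPowerSeries.ext
      intro α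
      rw [coeff_qhComponent]
      have hrhs : MvPowerSeries.coeff α
          (((0 : MvPolynomial (Fin 2) K) : MvPowerSeries (Fin 2) K)) = 0 := by
        rw [MvPolynomial.coeff_coe, MvPolynomial.coeff_zero]
      rw [hrhs]
      have hz : MvPowerSeries.coeff α (0 : MvPowerSeries (Fin 2) K) = 0 := map_zero _
      split_ifs with hw
      · rw [MvPowerSeries.coeff_C_mul]
        have h3 := congrArg (MvPowerSeries.coeff α) hF0
        rw [coeff_qhComponent, if_pos hw, hz] at h3
        rw [h3, mul_zero]
      · rfl
    · intro d hd
      exact absurd hd (Nat.not_lt_zero d)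
    · exact qhComponent_coe nw mw hnw hmw hgb
    · intro hirr
      exact absurd hirr not_irreducible_zero
  by_cases hgb0 : gb = 0
  · subst hgb0
    have hfau : IsUnit fa := hcop dvd_rfl (dvd_zero fa)
    have hfan : fa ≠ 0 := hfau.ne_zero
    have ha0 : a = 0 := by
      by_contra ha
      exact not_isUnit_of_homog_pos nw mw (by omega) hfa hfau
    subst ha0
    have hC := homog_zero_isC nw mw hnw hmw hfa
    have hc0 : MvPolynomial.coeff 0 fa ≠ 0 := fun h => hfan (by rw [hC, h, map_zero])
    have hfaC : (fa : MvPowerSeries (Fin 2) K)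
        = MvPowerSeries.C (σ := Fin 2) (R := K) (MvPolynomial.coeff 0 fa) := by
      conv_lhs => rw [hC]
      exact MvPolynomial.coe_C _
    refine ⟨(fa : MvPowerSeries (Fin 2) K),
      MvPowerSeries.C (σ := Fin 2) (R := K) (MvPolynomial.coeff 0 fa)⁻¹ * F, ?_, ?_, ?_, ?_, ?_, ?_⟩
    · rw [hfaC, ← mul_assoc, ← map_mul, mul_inv_cancel₀ hc0, map_one, one_mul]
    · intro d hd
      exact absurd hd (Nat.not_lt_zero d)
    · exact qhComponent_coe nw mw hnw hmw hfa
    · intro d hdb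
      apply MvPowerSeries.ext
      intro α
      have hz : MvPowerSeries.coeff α (0 : MvPowerSeries (Fin 2) K) = 0 := map_zero _
      rw [coeff_qhComponent, hz]
      split_ifs with hw
      · rw [MvPowerSeries.coeff_C_mul]
        have hF0 := hlow d (by omega)
        have h3 := congrArg (MvPowerSeries.coeff α) hF0
        rw [coeff_qhComponent, if_pos hw, hz] at h3
        rw [h3, mul_zero]
      · rfl
    · have hF0 : qhComponent K nw mw b F = 0 := by
        have h4 := hinit
        rw [mul_zero] at h4
        simpa using h4
      apply MvPowerSeries.ext
      intro α
      rw [coeff_qhComponent]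
      have hrhs : MvPowerSeries.coeff α
          (((0 : MvPolynomial (Fin 2) K) : MvPowerSeries (Fin 2) K)) = 0 := by
        rw [MvPolynomial.coeff_coe, MvPolynomial.coeff_zero]
      rw [hrhs]
      have hz : MvPowerSeries.coeff α (0 : MvPowerSeries (Fin 2) K) = 0 := map_zero _
      split_ifs with hw
      · rw [MvPowerSeries.coeff_C_mul]
        have h3 := congrArg (MvPowerSeries.coeff α) hF0
        rw [coeff_qhComponent, if_pos hw, hz] at h3
        rw [h3, mul_zero]
      · rfl
    · intro hirr
      exact absurd hfau hirr.not_isUnit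
  · -- main case
    have hlow' : ∀ d, d < a + b → polyComp nw mw d F = 0 := by
      intro d hd
      apply coe_poly_inj
      rw [← qhComponent_eq_coe nw mw hnw hmw, hlow d hd, MvPolynomial.coe_zero]
    have hinit' : polyComp nw mw (a + b) F = fa * gb := by
      apply coe_poly_inj
      rw [← qhComponent_eq_coe nw mw hnw hmw, hinit]
    have hspec := uvSeq_spec nw mw hnw hmw hfa0 hgb0 hcop hfa hgb F
    have hu : ∀ k, (uvSeq nw mw fa gb a b F k).1.IsWeightedHomogeneous (qhWeight nw mw) (a + k) :=
      fun k => (hspec k).1.1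
    have hv : ∀ k, (uvSeq nw mw fa gb a b F k).2.IsWeightedHomogeneous (qhWeight nw mw) (b + k) :=
      fun k => (hspec k).1.2
    have h00 : uvSeq nw mw fa gb a b F 0 = (fa, gb) := by rw [uvSeq]
    have hu0 : (uvSeq nw mw fa gb a b F 0).1 = fa := by rw [h00]
    have hv0 : (uvSeq nw mw fa gb a b F 0).2 = gb := by rw [h00]
    refine ⟨seriesOf nw mw a (fun k => (uvSeq nw mw fa gb a b F k).1),
      seriesOf nw mw b (fun k => (uvSeq nw mw fa gb a b F k).2), ?_, ?_, ?_, ?_, ?_, ?_⟩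
    · exact series_factorization nw mw hnw hmw hfa0 hgb0 hcop hfa hgb hlow' hinit'
    · intro d hd
      rw [qhComponent_eq_coe nw mw hnw hmw, polyComp_seriesOf nw mw hnw hmw a _ hu d,
        if_neg (by omega), MvPolynomial.coe_zero]
    · rw [qhComponent_eq_coe nw mw hnw hmw, polyComp_seriesOf nw mw hnw hmw a _ hu a,
        if_pos le_rfl, Nat.sub_self, hu0]
    · intro d hd
      rw [qhComponent_eq_coe nw mw hnw hmw, polyComp_seriesOf nw mw hnw hmw b _ hv d,
        if_neg (by omega), MvPolynomial.coe_zero]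
    · rw [qhComponent_eq_coe nw mw hnw hmw, polyComp_seriesOf nw mw hnw hmw b _ hv b,
        if_pos le_rfl, Nat.sub_self, hv0]
    · intro hIrr
      apply irreducible_series nw mw hnw hmw hfa hIrr
      · intro d hd
        rw [polyComp_seriesOf nw mw hnw hmw a _ hu d, if_neg (by omega)]
      · rw [polyComp_seriesOf nw mw hnw hmw a _ hu a, if_pos le_rfl, Nat.sub_self, hu0]
end
end

section
/- The power series f = (x_3^2 + x_1 x_2)(x_3 + x_1 x_2) ∈ K[[x_1,x_2,x_3]] has Newton polyhedron with a loose edge E with endpoints (1,1,1) and (2,2,0), and f|_E = x_1 x_2 (x_3 + x_1 x_2); yet there do not exist power series g, h with f = gh, g|_{E_1} = x_2(x_3 + x_1 x_2) and h|_{E_2} = x_1 for any decomposition E = E_1 + E_2. -/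
open scoped Pointwise

noncomputable section

/-- Standard scalar product on `Fin n → ℝ`. -/
def dotR {n : ℕ} (ξ a : Fin n → ℝ) : ℝ := ∑ i, ξ i * a i

/-- The nonnegative orthant in `Fin n → ℝ`. -/
def posOrthant (n : ℕ) : Set (Fin n → ℝ) := {x | ∀ i, 0 ≤ x i}

/-- A Newton polyhedron: the convex hull of `S + ℝ_{≥0}^n` for a nonempty `S ⊆ ℕ^n`. -/
def IsNewtonPolyhedron {n : ℕ} (Δ : Set (Fin n → ℝ)) : Prop :=
  ∃ S : Set (Fin n → ℕ), S.Nonempty ∧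
    Δ = convexHull ℝ (((fun α : Fin n → ℕ => fun i => (α i : ℝ)) '' S) + posOrthant n)

/-- The face of `Δ` in direction `ξ`: the points of `Δ` minimizing `⟨ξ, ·⟩`. -/
def faceOf {n : ℕ} (Δ : Set (Fin n → ℝ)) (ξ : Fin n → ℝ) : Set (Fin n → ℝ) :=
  {a ∈ Δ | ∀ b ∈ Δ, dotR ξ a ≤ dotR ξ b}

/-- `F` is a face of `Δ` (cut out by some `ξ` with nonnegative entries). -/
def IsFaceOf {n : ℕ} (Δ F : Set (Fin n → ℝ)) : Prop :=
  ∃ ξ : Fin n → ℝ, (∀ i, 0 ≤ ξ i) ∧ F = faceOf Δ ξ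

/-- The dimension of a face: the rank of its direction space. -/
def faceDim {n : ℕ} (F : Set (Fin n → ℝ)) : ℕ := Module.finrank ℝ (vectorSpan ℝ F)

/-- A loose edge: a compact edge not contained in any compact face of dimension ≥ 2. -/
def IsLooseEdge {n : ℕ} (Δ E : Set (Fin n → ℝ)) : Prop :=
  IsFaceOf Δ E ∧ IsCompact E ∧ faceDim E = 1 ∧
    ∀ F : Set (Fin n → ℝ), IsFaceOf Δ F → IsCompact F → E ⊆ F → faceDim F ≤ 1

/-- `v` is a vertex of `Δ` : the singleton `{v}` is a face. -/
def IsVertexOf {n : ℕ} (Δ : Set (Fin n → ℝ)) (v : Fin n → ℝ) : Prop :=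
  IsFaceOf Δ {v}

/-- The Newton polyhedron of a power series: convex hull of (support of f) + ℝ_{≥0}^n. -/
def newtonPolyhedron {K : Type*} [Field K] {n : ℕ} (f : MvPowerSeries (Fin n) K) :
    Set (Fin n → ℝ) :=
  convexHull ℝ
    {x | ∃ α : Fin n →₀ ℕ, MvPowerSeries.coeff α f ≠ 0 ∧
      ∃ z ∈ posOrthant n, x = (fun i => (α i : ℝ)) + z}

open Classical in
/-- The symbolic restriction of a power series `f` to a subset `A ⊆ ℝ^n`. -/
def restrictPS {K : Type*} [Field K] {n : ℕ} (f : MvPowerSeries (Fin n) K)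
    (A : Set (Fin n → ℝ)) : MvPowerSeries (Fin n) K :=
  fun α => if (fun i => (α i : ℝ)) ∈ A then MvPowerSeries.coeff α f else 0


section AuxCE
open MvPolynomial

def m3 (a b c : ℕ) : Fin 3 →₀ ℕ := Finsupp.equivFunOnFinite.symm ![a, b, c]

@[simp] lemma m3_apply_0 (a b c : ℕ) : m3 a b c 0 = a := rfl
@[simp] lemma m3_apply_1 (a b c : ℕ) : m3 a b c 1 = b := rfl
@[simp] lemma m3_apply_2 (a b c : ℕ) : m3 a b c 2 = c := rfl

lemma m3_eta (α : Fin 3 →₀ ℕ) : m3 (α 0) (α 1) (α 2) = α := by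
  ext i; fin_cases i <;> rfl

@[simp] lemma m3_inj {a b c a' b' c' : ℕ} :
    m3 a b c = m3 a' b' c' ↔ a = a' ∧ b = b' ∧ c = c' := by
  constructor
  · intro h
    exact ⟨congrArg (fun f => f 0) (congrArg Finsupp.toFun h),
      congrArg (fun f => f 1) (congrArg Finsupp.toFun h),
      congrArg (fun f => f 2) (congrArg Finsupp.toFun h)⟩
  · rintro ⟨rfl, rfl, rfl⟩; rfl

lemma m3_add (a b c a' b' c' : ℕ) : m3 a b c + m3 a' b' c' = m3 (a+a') (b+b') (c+c') := by
  ext i; fin_cases i <;> rfl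

lemma smul_m3 (n a b c : ℕ) : n • m3 a b c = m3 (n*a) (n*b) (n*c) := by
  ext i; fin_cases i <;> simp [m3]

lemma single_m3 (i : Fin 3) (n : ℕ) :
    Finsupp.single i n = m3 (if i = 0 then n else 0) (if i = 1 then n else 0) (if i = 2 then n else 0) := by
  ext j; fin_cases j <;> fin_cases i <;> simp [m3, Finsupp.single_apply]

lemma coeff_mul_expand {K : Type*} [Field K] (g h : MvPowerSeries (Fin 3) K) (a b c : ℕ) :
    MvPowerSeries.coeff (m3 a b c) (g * h) =
      ∑ i ∈ Finset.range (a+1), ∑ j ∈ Finset.range (b+1), ∑ k ∈ Finset.range (c+1),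
        MvPowerSeries.coeff (m3 i j k) g * MvPowerSeries.coeff (m3 (a-i) (b-j) (c-k)) h := by
  rw [MvPowerSeries.coeff_mul]
  rw [← Finset.sum_product', ← Finset.sum_product']
  refine Finset.sum_nbij' (fun p => ((p.1 0, p.1 1), p.1 2))
    (fun q => (m3 q.1.1 q.1.2 q.2, m3 (a - q.1.1) (b - q.1.2) (c - q.2))) ?_ ?_ ?_ ?_ ?_
  · intro p hp
    rw [Finset.HasAntidiagonal.mem_antidiagonal] at hp
    have h0 : p.1 0 + p.2 0 = a := by rw [← m3_apply_0 a b c, ← hp]; rfl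
    have h1 : p.1 1 + p.2 1 = b := by rw [← m3_apply_1 a b c, ← hp]; rfl
    have h2 : p.1 2 + p.2 2 = c := by rw [← m3_apply_2 a b c, ← hp]; rfl
    simp only [Finset.mem_product, Finset.mem_range]
    omega
  · intro q hq
    simp only [Finset.mem_product, Finset.mem_range] at hq
    rw [Finset.HasAntidiagonal.mem_antidiagonal, m3_add]
    simp only [m3_inj]
    omega
  · intro p hp
    rw [Finset.HasAntidiagonal.mem_antidiagonal] at hp
    have h0 : p.1 0 + p.2 0 = a := by rw [← m3_apply_0 a b c, ← hp]; rfl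
    have h1 : p.1 1 + p.2 1 = b := by rw [← m3_apply_1 a b c, ← hp]; rfl
    have h2 : p.1 2 + p.2 2 = c := by rw [← m3_apply_2 a b c, ← hp]; rfl
    have e2 : m3 (a - p.1 0) (b - p.1 1) (c - p.1 2) = p.2 := by
      rw [show a - p.1 0 = p.2 0 by omega, show b - p.1 1 = p.2 1 by omega,
        show c - p.1 2 = p.2 2 by omega]
      exact m3_eta _
    exact Prod.ext (m3_eta _) e2
  · intro q hq; rfl
  · intro p hp
    rw [Finset.HasAntidiagonal.mem_antidiagonal] at hp
    have h0 : p.1 0 + p.2 0 = a := by rw [← m3_apply_0 a b c, ← hp]; rfl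
    have h1 : p.1 1 + p.2 1 = b := by rw [← m3_apply_1 a b c, ← hp]; rfl
    have h2 : p.1 2 + p.2 2 = c := by rw [← m3_apply_2 a b c, ← hp]; rfl
    simp only
    rw [m3_eta, show a - p.1 0 = p.2 0 by omega, show b - p.1 1 = p.2 1 by omega,
      show c - p.1 2 = p.2 2 by omega, m3_eta]

lemma fpoly_eq {K : Type*} [Field K] :
    ((X 2 ^ 2 + X 0 * X 1) * (X 2 + X 0 * X 1) : MvPolynomial (Fin 3) K)
    = monomial (m3 0 0 3) 1 + monomial (m3 1 1 2) 1 + monomial (m3 1 1 1) 1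
      + monomial (m3 2 2 0) 1 := by
  simp only [X, single_m3, monomial_pow, monomial_mul, add_mul, mul_add, one_mul, mul_one,
    one_pow, m3_add, Fin.isValue]
  norm_num [Fin.ext_iff, m3_add, smul_m3]
  ring

lemma coeff_fp {K : Type*} [Field K] (α : Fin 3 →₀ ℕ) :
    MvPowerSeries.coeff α
      ((((X 2 ^ 2 + X 0 * X 1) * (X 2 + X 0 * X 1) : MvPolynomial (Fin 3) K)) :
        MvPowerSeries (Fin 3) K)
    = (if m3 0 0 3 = α then 1 else 0) + (if m3 1 1 2 = α then 1 else 0)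
      + (if m3 1 1 1 = α then 1 else 0) + (if m3 2 2 0 = α then 1 else 0) := by
  rw [MvPolynomial.coeff_coe, fpoly_eq]
  simp only [MvPolynomial.coeff_add, MvPolynomial.coeff_monomial]



-- cast of m3 to real vectors
lemma cast_m3 (a b c : ℕ) :
    (fun i => ((m3 a b c i : ℕ) : ℝ)) = ![(a:ℝ), (b:ℝ), (c:ℝ)] := by
  funext i; fin_cases i <;> simp

lemma mem_segment_nat (α : Fin 3 →₀ ℕ) :
    ((fun i => (α i : ℝ)) ∈ segment ℝ ![1, 1, 1] ![2, 2, 0]) ↔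
      α = m3 1 1 1 ∨ α = m3 2 2 0 := by
  constructor
  · intro hx
    rw [segment_eq_image] at hx
    obtain ⟨t, ht, heq⟩ := hx
    simp only [Set.mem_Icc] at ht
    have h0 : (α 0 : ℝ) = 1 + t := by
      have := congrFun heq 0
      simp at this
      linarith [this]
    have h1 : (α 1 : ℝ) = 1 + t := by
      have := congrFun heq 1
      simp at this
      linarith [this]
    have h2 : (α 2 : ℝ) = 1 - t := by
      have := congrFun heq 2
      simp at this
      linarith [this]
    have hα0 : α 0 = 1 ∨ α 0 = 2 := by
      have l1 : (1:ℝ) ≤ (α 0 : ℝ) := by linarith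
      have l2 : (α 0 : ℝ) ≤ 2 := by linarith
      have l1' : 1 ≤ α 0 := by exact_mod_cast l1
      have l2' : α 0 ≤ 2 := by exact_mod_cast l2
      omega
    rcases hα0 with h | h
    · left
      have ht0 : t = 0 := by rw [h] at h0; push_cast at h0; linarith
      rw [← m3_eta α, h]
      have : (α 1 : ℝ) = 1 := by rw [h1, ht0]; norm_num
      have e1 : α 1 = 1 := by exact_mod_cast this
      have : (α 2 : ℝ) = 1 := by rw [h2, ht0]; norm_num
      have e2 : α 2 = 1 := by exact_mod_cast this
      rw [e1, e2]
    · right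
      have ht0 : t = 1 := by rw [h] at h0; push_cast at h0; linarith
      rw [← m3_eta α, h]
      have : (α 1 : ℝ) = 2 := by rw [h1, ht0]; norm_num
      have e1 : α 1 = 2 := by exact_mod_cast this
      have : (α 2 : ℝ) = 0 := by rw [h2, ht0]; norm_num
      have e2 : α 2 = 0 := by exact_mod_cast this
      rw [e1, e2]
  · rintro (rfl | rfl)
    · have : (fun i => ((m3 1 1 1) i : ℝ)) = ![(1:ℝ), 1, 1] := by
        funext i; fin_cases i <;> norm_num [m3]
      rw [this]
      exact left_mem_segment ℝ _ _
    · have : (fun i => ((m3 2 2 0) i : ℝ)) = ![(2:ℝ), 2, 0] := by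
        funext i; fin_cases i <;> norm_num [m3]
      rw [this]
      exact right_mem_segment ℝ _ _

section Part3
variable {K : Type*} [Field K] (g h : MvPowerSeries (Fin 3) K)

lemma part3 (hf : ((((X 2 ^ 2 + X 0 * X 1) * (X 2 + X 0 * X 1) : MvPolynomial (Fin 3) K)) :
        MvPowerSeries (Fin 3) K) = g * h)
    (hG011 : MvPowerSeries.coeff (m3 0 1 1) g = 1)
    (hH100 : MvPowerSeries.coeff (m3 1 0 0) h = 1) : False := by
  have mk : ∀ a b c : ℕ, MvPowerSeries.coeff (m3 a b c)
      ((((X 2 ^ 2 + X 0 * X 1) * (X 2 + X 0 * X 1) : MvPolynomial (Fin 3) K)) :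
        MvPowerSeries (Fin 3) K) = MvPowerSeries.coeff (m3 a b c) (g * h) := by
    intro a b c; rw [hf]
  have e000 := mk 0 0 0
  rw [coeff_fp, coeff_mul_expand] at e000
  simp only [Finset.sum_range_succ, Finset.sum_range_zero, m3_inj, zero_add] at e000
  norm_num at e000
  have e100 := mk 1 0 0
  rw [coeff_fp, coeff_mul_expand] at e100
  simp only [Finset.sum_range_succ, Finset.sum_range_zero, m3_inj, zero_add] at e100
  norm_num at e100
  -- G000 = 0 in all cases
  have hG000 : MvPowerSeries.coeff (m3 0 0 0) g = 0 := by
    rcases e000 with h0 | h0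
    · exact h0
    · rw [h0, hH100] at e100
      simp at e100
      exact e100.symm
  by_cases hH000 : MvPowerSeries.coeff (m3 0 0 0) h = 0
  · -- case A
    have e200 := mk 2 0 0
    rw [coeff_fp, coeff_mul_expand] at e200
    simp only [Finset.sum_range_succ, Finset.sum_range_zero, m3_inj, zero_add] at e200
    norm_num at e200
    simp [hG000, hH000, hH100] at e200
    have hG100 := e200.symm
    have e110 := mk 1 1 0
    rw [coeff_fp, coeff_mul_expand] at e110
    simp only [Finset.sum_range_succ, Finset.sum_range_zero, m3_inj, zero_add] at e110
    norm_num at e110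
    simp [hG000, hH000, hH100, hG100] at e110
    have hG010 := e110.symm
    have e101 := mk 1 0 1
    rw [coeff_fp, coeff_mul_expand] at e101
    simp only [Finset.sum_range_succ, Finset.sum_range_zero, m3_inj, zero_add] at e101
    norm_num at e101
    simp [hG000, hH000, hH100, hG100] at e101
    have hG001 := e101.symm
    have e300 := mk 3 0 0
    rw [coeff_fp, coeff_mul_expand] at e300
    simp only [Finset.sum_range_succ, Finset.sum_range_zero, m3_inj, zero_add] at e300
    norm_num at e300
    simp [hG000, hH000, hH100, hG100] at e300
    have hG200 := e300.symm
    have e210 := mk 2 1 0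
    rw [coeff_fp, coeff_mul_expand] at e210
    simp only [Finset.sum_range_succ, Finset.sum_range_zero, m3_inj, zero_add] at e210
    norm_num at e210
    simp [hG000, hH000, hH100, hG100, hG010, hG200] at e210
    have hG110 := e210.symm
    have e120 := mk 1 2 0
    rw [coeff_fp, coeff_mul_expand] at e120
    simp only [Finset.sum_range_succ, Finset.sum_range_zero, m3_inj, zero_add] at e120
    norm_num at e120
    simp [hG000, hH000, hH100, hG100, hG010, hG110] at e120
    have hG020 := e120.symm
    have e201 := mk 2 0 1
    rw [coeff_fp, coeff_mul_expand] at e201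
    simp only [Finset.sum_range_succ, Finset.sum_range_zero, m3_inj, zero_add] at e201
    norm_num at e201
    simp [hG000, hH000, hH100, hG100, hG001, hG200] at e201
    have hG101 := e201.symm
    have e102 := mk 1 0 2
    rw [coeff_fp, coeff_mul_expand] at e102
    simp only [Finset.sum_range_succ, Finset.sum_range_zero, m3_inj, zero_add] at e102
    norm_num at e102
    simp [hG000, hH000, hH100, hG100, hG001, hG101] at e102
    have hG002 := e102.symm
    have e003 := mk 0 0 3
    rw [coeff_fp, coeff_mul_expand] at e003
    simp only [Finset.sum_range_succ, Finset.sum_range_zero, m3_inj, zero_add] at e003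
    norm_num at e003
    simp [hG000, hH000, hG001, hG002] at e003

  · -- case B
    have e010 := mk 0 1 0
    rw [coeff_fp, coeff_mul_expand] at e010
    simp only [Finset.sum_range_succ, Finset.sum_range_zero, m3_inj, zero_add] at e010
    norm_num at e010
    simp [hG000, hH000] at e010
    have xx1 := e010
    have e001 := mk 0 0 1
    rw [coeff_fp, coeff_mul_expand] at e001
    simp only [Finset.sum_range_succ, Finset.sum_range_zero, m3_inj, zero_add] at e001
    norm_num at e001
    simp [hG000, hH000] at e001
    have xx2 := e001
    have e011 := mk 0 1 1
    rw [coeff_fp, coeff_mul_expand] at e011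
    simp only [Finset.sum_range_succ, Finset.sum_range_zero, m3_inj, zero_add] at e011
    norm_num at e011
    simp [hG000, hG011, xx1, xx2, hH000] at e011
    exact hH000 e011.symm

end Part3
end AuxCE

section Part1
open MvPolynomial
variable {K : Type*} [Field K]

open Classical in
lemma coeff_restrict (f : MvPowerSeries (Fin 3) K) (A : Set (Fin 3 → ℝ)) (α : Fin 3 →₀ ℕ) :
    MvPowerSeries.coeff α (restrictPS f A)
      = if (fun i => (α i : ℝ)) ∈ A then MvPowerSeries.coeff α f else 0 := by
  rw [MvPowerSeries.coeff_apply]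
  rfl

lemma supp_f {α : Fin 3 →₀ ℕ}
    (hα : MvPowerSeries.coeff α
      ((((X 2 ^ 2 + X 0 * X 1) * (X 2 + X 0 * X 1) : MvPolynomial (Fin 3) K)) :
        MvPowerSeries (Fin 3) K) ≠ 0) :
    α = m3 0 0 3 ∨ α = m3 1 1 2 ∨ α = m3 1 1 1 ∨ α = m3 2 2 0 := by
  by_contra hc
  push_neg at hc
  obtain ⟨h1, h2, h3, h4⟩ := hc
  apply hα
  rw [coeff_fp, if_neg (fun e => h1 e.symm), if_neg (fun e => h2 e.symm),
    if_neg (fun e => h3 e.symm), if_neg (fun e => h4 e.symm)]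
  norm_num

lemma dotR3 (ξ x : Fin 3 → ℝ) : dotR ξ x = ξ 0 * x 0 + ξ 1 * x 1 + ξ 2 * x 2 := by
  simp [dotR, Fin.sum_univ_three]

lemma dotR_add (ξ x y : Fin 3 → ℝ) : dotR ξ (x + y) = dotR ξ x + dotR ξ y := by
  simp only [dotR3, Pi.add_apply]; ring

lemma isLinearMap_dotR (ξ : Fin 3 → ℝ) : IsLinearMap ℝ (dotR ξ) := by
  constructor
  · exact dotR_add ξ
  · intro c x; simp only [dotR3, Pi.smul_apply, smul_eq_mul]; ring

lemma dotR_nonneg {ξ z : Fin 3 → ℝ} (hξ : ∀ i, 0 ≤ ξ i) (hz : ∀ i, 0 ≤ z i) :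
    0 ≤ dotR ξ z := by
  rw [dotR3]
  have := mul_nonneg (hξ 0) (hz 0)
  have := mul_nonneg (hξ 1) (hz 1)
  have := mul_nonneg (hξ 2) (hz 2)
  linarith

lemma cast111 : (fun i => (((m3 1 1 1 : Fin 3 →₀ ℕ) i : ℕ) : ℝ)) = ![1, 1, 1] := by
  funext i; fin_cases i <;> norm_num [m3]

lemma cast220 : (fun i => (((m3 2 2 0 : Fin 3 →₀ ℕ) i : ℕ) : ℝ)) = ![2, 2, 0] := by
  funext i; fin_cases i <;> norm_num [m3]

lemma dot_T_lower (ξ : Fin 3 → ℝ) (h0 : 0 ≤ ξ 0) (h1 : 0 ≤ ξ 1) (hs : ξ 2 = ξ 0 + ξ 1) :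
    ∀ x ∈ {x | ∃ α : Fin 3 →₀ ℕ, MvPowerSeries.coeff α
        ((((X 2 ^ 2 + X 0 * X 1) * (X 2 + X 0 * X 1) : MvPolynomial (Fin 3) K)) :
          MvPowerSeries (Fin 3) K) ≠ 0 ∧
        ∃ z ∈ posOrthant 3, x = (fun i => (α i : ℝ)) + z},
      2 * (ξ 0 + ξ 1) ≤ dotR ξ x := by
  rintro x ⟨α, hα, z, hz, rfl⟩
  have hξ : ∀ i, 0 ≤ ξ i := by
    intro i; fin_cases i
    · exact h0
    · exact h1
    · show 0 ≤ ξ 2; rw [hs]; linarith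
  have hzn : 0 ≤ dotR ξ z := dotR_nonneg hξ hz
  rw [dotR_add]
  rcases supp_f hα with rfl | rfl | rfl | rfl <;>
    rw [cast_m3] <;> rw [dotR3] <;> push_cast <;> linarith

lemma hull_lower (ξ : Fin 3 → ℝ) (h0 : 0 ≤ ξ 0) (h1 : 0 ≤ ξ 1) (hs : ξ 2 = ξ 0 + ξ 1) :
    ∀ x ∈ newtonPolyhedron
      ((((X 2 ^ 2 + X 0 * X 1) * (X 2 + X 0 * X 1) : MvPolynomial (Fin 3) K)) :
        MvPowerSeries (Fin 3) K),
      2 * (ξ 0 + ξ 1) ≤ dotR ξ x := by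
  intro x hx
  have hconv : Convex ℝ {y : Fin 3 → ℝ | 2 * (ξ 0 + ξ 1) ≤ dotR ξ y} :=
    convex_halfSpace_ge (isLinearMap_dotR ξ) _
  exact convexHull_min (dot_T_lower ξ h0 h1 hs) hconv hx

lemma level_subset (ξ : Fin 3 → ℝ) (h0 : 0 < ξ 0) (h1 : 0 < ξ 1) (hs : ξ 2 = ξ 0 + ξ 1) :
    ∀ x ∈ newtonPolyhedron
      ((((X 2 ^ 2 + X 0 * X 1) * (X 2 + X 0 * X 1) : MvPolynomial (Fin 3) K)) :
        MvPowerSeries (Fin 3) K),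
      dotR ξ x ≤ 2 * (ξ 0 + ξ 1) → x ∈ segment ℝ ![(1:ℝ), 1, 1] ![2, 2, 0] := by
  intro x hx hle
  rw [newtonPolyhedron, convexHull_eq] at hx
  obtain ⟨ι, t, w, zf, hw0, hw1, hzT, hcm⟩ := hx
  have key : ∀ i ∈ t, 2 * (ξ 0 + ξ 1) ≤ dotR ξ (zf i) := fun i hi =>
    dot_T_lower ξ h0.le h1.le hs _ (hzT i hi)
  have hdot : dotR ξ x = ∑ i ∈ t, w i * dotR ξ (zf i) := by
    rw [← hcm, Finset.centerMass_eq_of_sum_1 _ _ hw1]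
    rw [show dotR ξ = ⇑(IsLinearMap.mk' _ (isLinearMap_dotR ξ)) from rfl, map_sum]
    simp
  have hsum0 : ∑ i ∈ t, w i * (dotR ξ (zf i) - 2 * (ξ 0 + ξ 1)) = 0 := by
    have expand : ∑ i ∈ t, w i * (dotR ξ (zf i) - 2 * (ξ 0 + ξ 1))
        = (∑ i ∈ t, w i * dotR ξ (zf i)) - (∑ i ∈ t, w i) * (2 * (ξ 0 + ξ 1)) := by
      rw [Finset.sum_mul, ← Finset.sum_sub_distrib]
      congr 1; funext i; ring
    refine le_antisymm ?_ (Finset.sum_nonneg fun i hi =>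
      mul_nonneg (hw0 i hi) (sub_nonneg.2 (key i hi)))
    rw [expand, hw1, ← hdot]
    linarith
  have hzero : ∀ i ∈ t, w i * (dotR ξ (zf i) - 2 * (ξ 0 + ξ 1)) = 0 :=
    (Finset.sum_eq_zero_iff_of_nonneg fun i hi =>
      mul_nonneg (hw0 i hi) (sub_nonneg.2 (key i hi))).1 hsum0
  have hmem : ∀ i ∈ t, w i ≠ 0 → zf i ∈ segment ℝ ![(1:ℝ), 1, 1] ![2, 2, 0] := by
    intro i hi hwi
    have hdz : dotR ξ (zf i) = 2 * (ξ 0 + ξ 1) := by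
      have := hzero i hi
      rcases mul_eq_zero.1 this with h | h
      · exact absurd h hwi
      · linarith [sub_eq_zero.1 h]
    obtain ⟨α, hα, z, hz, hzeq⟩ := hzT i hi
    have hξ : ∀ j, 0 ≤ ξ j := by
      intro j; fin_cases j
      · exact h0.le
      · exact h1.le
      · show 0 ≤ ξ 2; rw [hs]; linarith
    have hzn : 0 ≤ dotR ξ z := dotR_nonneg hξ hz
    have hz0 : dotR ξ (fun j => (α j : ℝ)) + dotR ξ z = 2 * (ξ 0 + ξ 1) := by
      rw [← dotR_add, ← hzeq, hdz]
    rcases supp_f hα with rfl | rfl | rfl | rfl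
    · exfalso
      rw [cast_m3, dotR3] at hz0
      push_cast at hz0
      linarith
    · exfalso
      rw [cast_m3, dotR3] at hz0
      push_cast at hz0
      linarith
    · -- α = (1,1,1) : z must vanish
      have hdca : dotR ξ (fun j => (((m3 1 1 1 : Fin 3 →₀ ℕ) j : ℕ) : ℝ)) = ξ 0 + ξ 1 + ξ 2 := by
        rw [cast111, dotR3]
        simp only [Matrix.cons_val_zero, Matrix.cons_val_one, Matrix.head_cons,
          Matrix.cons_val_two, Matrix.tail_cons]
        ring
      have hdzz : dotR ξ z = 0 := by rw [hdca] at hz0; linarith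
      have hzz : z = 0 := by
        rw [dotR3] at hdzz
        have n0 := mul_nonneg (hξ 0) (hz 0)
        have n1 := mul_nonneg (hξ 1) (hz 1)
        have n2 := mul_nonneg (hξ 2) (hz 2)
        have z0 : z 0 = 0 := by
          by_contra hc
          have : 0 < ξ 0 * z 0 := mul_pos h0 (lt_of_le_of_ne (hz 0) (Ne.symm hc))
          linarith
        have z1 : z 1 = 0 := by
          by_contra hc
          have : 0 < ξ 1 * z 1 := mul_pos h1 (lt_of_le_of_ne (hz 1) (Ne.symm hc))
          linarith
        have z2 : z 2 = 0 := by
          by_contra hc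
          have hξ2 : 0 < ξ 2 := by rw [hs]; linarith
          have : 0 < ξ 2 * z 2 := mul_pos hξ2 (lt_of_le_of_ne (hz 2) (Ne.symm hc))
          linarith
        funext j; fin_cases j <;> assumption
      rw [hzeq, hzz, add_zero, cast111]
      exact left_mem_segment ℝ _ _
    · -- α = (2,2,0) : z must vanish
      have hdca : dotR ξ (fun j => (((m3 2 2 0 : Fin 3 →₀ ℕ) j : ℕ) : ℝ))
          = 2 * (ξ 0 + ξ 1) := by
        rw [cast220, dotR3]
        simp only [Matrix.cons_val_zero, Matrix.cons_val_one, Matrix.head_cons,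
          Matrix.cons_val_two, Matrix.tail_cons]
        ring
      have hdzz : dotR ξ z = 0 := by rw [hdca] at hz0; linarith
      have hzz : z = 0 := by
        rw [dotR3] at hdzz
        have n0 := mul_nonneg (hξ 0) (hz 0)
        have n1 := mul_nonneg (hξ 1) (hz 1)
        have n2 := mul_nonneg (hξ 2) (hz 2)
        have z0 : z 0 = 0 := by
          by_contra hc
          have : 0 < ξ 0 * z 0 := mul_pos h0 (lt_of_le_of_ne (hz 0) (Ne.symm hc))
          linarith
        have z1 : z 1 = 0 := by
          by_contra hc
          have : 0 < ξ 1 * z 1 := mul_pos h1 (lt_of_le_of_ne (hz 1) (Ne.symm hc))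
          linarith
        have z2 : z 2 = 0 := by
          by_contra hc
          have hξ2 : 0 < ξ 2 := by rw [hs]; linarith
          have : 0 < ξ 2 * z 2 := mul_pos hξ2 (lt_of_le_of_ne (hz 2) (Ne.symm hc))
          linarith
        funext j; fin_cases j <;> assumption
      rw [hzeq, hzz, add_zero, cast220]
      exact right_mem_segment ℝ _ _
  have hx' : x ∈ convexHull ℝ (segment ℝ ![(1:ℝ), 1, 1] ![2, 2, 0]) := by
    rw [← hcm, ← Finset.centerMass_filter_ne_zero]
    refine Finset.centerMass_mem_convexHull _ (fun i hi => hw0 i (Finset.mem_filter.1 hi).1)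
      ?_ (fun i hi => hmem i (Finset.mem_filter.1 hi).1 (Finset.mem_filter.1 hi).2)
    rw [Finset.sum_filter_ne_zero, hw1]
    norm_num
  rwa [(convex_segment _ _).convexHull_eq] at hx'

lemma mem_T111 : ![(1:ℝ), 1, 1] ∈ {x | ∃ α : Fin 3 →₀ ℕ, MvPowerSeries.coeff α
      ((((X 2 ^ 2 + X 0 * X 1) * (X 2 + X 0 * X 1) : MvPolynomial (Fin 3) K)) :
        MvPowerSeries (Fin 3) K) ≠ 0 ∧
      ∃ z ∈ posOrthant 3, x = (fun i => (α i : ℝ)) + z} := by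
  refine ⟨m3 1 1 1, ?_, 0, fun i => le_refl 0, by rw [cast111]; simp⟩
  rw [coeff_fp]
  norm_num

lemma mem_T220 : ![(2:ℝ), 2, 0] ∈ {x | ∃ α : Fin 3 →₀ ℕ, MvPowerSeries.coeff α
      ((((X 2 ^ 2 + X 0 * X 1) * (X 2 + X 0 * X 1) : MvPolynomial (Fin 3) K)) :
        MvPowerSeries (Fin 3) K) ≠ 0 ∧
      ∃ z ∈ posOrthant 3, x = (fun i => (α i : ℝ)) + z} := by
  refine ⟨m3 2 2 0, ?_, 0, fun i => le_refl 0, by rw [cast220]; simp⟩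
  rw [coeff_fp]
  norm_num

end Part1

section MoreAux
open MvPolynomial
variable {K : Type*} [Field K]

lemma qpoly_eq : (X 0 * X 1 * (X 2 + X 0 * X 1) : MvPolynomial (Fin 3) K)
    = monomial (m3 1 1 1) 1 + monomial (m3 2 2 0) 1 := by
  simp only [X, single_m3, monomial_pow, monomial_mul, add_mul, mul_add, one_mul, mul_one,
    one_pow, m3_add, Fin.isValue]
  norm_num [Fin.ext_iff, m3_add, smul_m3]

lemma gpoly_eq : (X 1 * (X 2 + X 0 * X 1) : MvPolynomial (Fin 3) K)
    = monomial (m3 0 1 1) 1 + monomial (m3 1 2 0) 1 := by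
  simp only [X, single_m3, monomial_pow, monomial_mul, add_mul, mul_add, one_mul, mul_one,
    one_pow, m3_add, Fin.isValue]
  norm_num [Fin.ext_iff, m3_add, smul_m3]

lemma xpoly_eq : (X 0 : MvPolynomial (Fin 3) K) = monomial (m3 1 0 0) 1 := by
  rw [X, single_m3]
  norm_num [Fin.ext_iff]

lemma coeff_qp (α : Fin 3 →₀ ℕ) :
    MvPowerSeries.coeff α ((X 0 * X 1 * (X 2 + X 0 * X 1) : MvPolynomial (Fin 3) K) :
      MvPowerSeries (Fin 3) K)
    = (if m3 1 1 1 = α then 1 else 0) + (if m3 2 2 0 = α then 1 else 0) := by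
  rw [MvPolynomial.coeff_coe, qpoly_eq]
  simp only [MvPolynomial.coeff_add, MvPolynomial.coeff_monomial]

lemma coeff_gp (α : Fin 3 →₀ ℕ) :
    MvPowerSeries.coeff α ((X 1 * (X 2 + X 0 * X 1) : MvPolynomial (Fin 3) K) :
      MvPowerSeries (Fin 3) K)
    = (if m3 0 1 1 = α then 1 else 0) + (if m3 1 2 0 = α then 1 else 0) := by
  rw [MvPolynomial.coeff_coe, gpoly_eq]
  simp only [MvPolynomial.coeff_add, MvPolynomial.coeff_monomial]

lemma coeff_xp (α : Fin 3 →₀ ℕ) :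
    MvPowerSeries.coeff α ((X 0 : MvPolynomial (Fin 3) K) : MvPowerSeries (Fin 3) K)
    = (if m3 1 0 0 = α then 1 else 0) := by
  rw [MvPolynomial.coeff_coe, xpoly_eq]
  simp only [MvPolynomial.coeff_monomial]

lemma vectorSpan_seg :
    vectorSpan ℝ (segment ℝ ![(1:ℝ), 1, 1] ![2, 2, 0])
      = vectorSpan ℝ ({![(1:ℝ), 1, 1], ![2, 2, 0]} : Set (Fin 3 → ℝ)) := by
  apply le_antisymm
  · have h1 : segment ℝ ![(1:ℝ), 1, 1] ![2, 2, 0]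
        ⊆ (affineSpan ℝ ({![(1:ℝ), 1, 1], ![2, 2, 0]} : Set (Fin 3 → ℝ)) : Set (Fin 3 → ℝ)) := by
      rw [← convexHull_pair]
      exact convexHull_subset_affineSpan _
    calc vectorSpan ℝ (segment ℝ ![(1:ℝ), 1, 1] ![2, 2, 0])
        ≤ vectorSpan ℝ ((affineSpan ℝ ({![(1:ℝ), 1, 1], ![2, 2, 0]} : Set (Fin 3 → ℝ)) :
            Set (Fin 3 → ℝ))) := vectorSpan_mono ℝ h1
      _ = (affineSpan ℝ ({![(1:ℝ), 1, 1], ![2, 2, 0]} : Set (Fin 3 → ℝ))).direction :=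
          (AffineSubspace.direction_eq_vectorSpan _).symm
      _ = vectorSpan ℝ ({![(1:ℝ), 1, 1], ![2, 2, 0]} : Set (Fin 3 → ℝ)) :=
          direction_affineSpan ℝ _
  · apply vectorSpan_mono ℝ
    rw [Set.insert_subset_iff, Set.singleton_subset_iff]
    exact ⟨left_mem_segment ℝ _ _, right_mem_segment ℝ _ _⟩

lemma faceDim_seg : faceDim (segment ℝ ![(1:ℝ), 1, 1] ![2, 2, 0]) = 1 := by
  rw [faceDim, vectorSpan_seg, vectorSpan_pair]
  refine finrank_span_singleton fun hcon => ?_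
  have h2 := congrFun hcon 2
  norm_num [Pi.sub_apply, Matrix.cons_val_two, Matrix.tail_cons, Matrix.head_cons] at h2

end MoreAux

open MvPolynomial in
open scoped Pointwise in
/-- The counterexample: for `f = (x₃² + x₁x₂)(x₃ + x₁x₂)`, the Newton polyhedron has a
loose edge `E` with endpoints `(1,1,1)` and `(2,2,0)`, and `f|_E = x₁x₂(x₃ + x₁x₂)`;
nevertheless `f` admits no factorization `f = g·h` with `g|_{E₁} = x₂(x₃ + x₁x₂)` and
`h|_{E₂} = x₁` for any Minkowski decomposition `E = E₁ + E₂`. -/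
theorem counterexample_divisible_initial {K : Type*} [Field K] :
    ∀ (f : MvPowerSeries (Fin 3) K),
    f = (((X 2 ^ 2 + X 0 * X 1) * (X 2 + X 0 * X 1) : MvPolynomial (Fin 3) K) :
      MvPowerSeries (Fin 3) K) →
    ∀ (E : Set (Fin 3 → ℝ)), E = segment ℝ ![1, 1, 1] ![2, 2, 0] →
    IsLooseEdge (newtonPolyhedron f) E ∧
    restrictPS f E
      = ((X 0 * X 1 * (X 2 + X 0 * X 1) : MvPolynomial (Fin 3) K) :
          MvPowerSeries (Fin 3) K) ∧
    ¬ ∃ (g h : MvPowerSeries (Fin 3) K) (E₁ E₂ : Set (Fin 3 → ℝ)),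
        f = g * h ∧ E = E₁ + E₂ ∧
        restrictPS g E₁
          = ((X 1 * (X 2 + X 0 * X 1) : MvPolynomial (Fin 3) K) : MvPowerSeries (Fin 3) K) ∧
        restrictPS h E₂ = ((X 0 : MvPolynomial (Fin 3) K) : MvPowerSeries (Fin 3) K) := by
  rintro f rfl E rfl
  have aΔ : ![(1:ℝ), 1, 1] ∈ newtonPolyhedron
      ((((X 2 ^ 2 + X 0 * X 1) * (X 2 + X 0 * X 1) : MvPolynomial (Fin 3) K)) :
        MvPowerSeries (Fin 3) K) := by
    rw [newtonPolyhedron]; exact subset_convexHull ℝ _ mem_T111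
  have bΔ : ![(2:ℝ), 2, 0] ∈ newtonPolyhedron
      ((((X 2 ^ 2 + X 0 * X 1) * (X 2 + X 0 * X 1) : MvPolynomial (Fin 3) K)) :
        MvPowerSeries (Fin 3) K) := by
    rw [newtonPolyhedron]; exact subset_convexHull ℝ _ mem_T220
  have dA : ∀ ξ : Fin 3 → ℝ, dotR ξ ![1, 1, 1] = ξ 0 + ξ 1 + ξ 2 := by
    intro ξ; rw [dotR3]; norm_num [Matrix.cons_val_two, Matrix.tail_cons, Matrix.head_cons]
  have dB : ∀ ξ : Fin 3 → ℝ, dotR ξ ![2, 2, 0] = 2 * ξ 0 + 2 * ξ 1 := by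
    intro ξ; rw [dotR3]; norm_num [Matrix.cons_val_two, Matrix.tail_cons, Matrix.head_cons]; ring
  refine ⟨⟨?_, ?_, ?_, ?_⟩, ?_, ?_⟩
  · -- IsFaceOf
    refine ⟨![1, 1, 2], by intro i; fin_cases i <;> norm_num, ?_⟩
    ext x
    constructor
    · intro hx
      refine ⟨(convex_convexHull ℝ _).segment_subset
        (subset_convexHull ℝ _ mem_T111) (subset_convexHull ℝ _ mem_T220) hx, ?_⟩
      intro y hy
      have hxv : dotR ![(1:ℝ), 1, 2] x = 4 := by
        rw [segment_eq_image] at hx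
        obtain ⟨t, ht, rfl⟩ := hx
        rw [dotR3]
        norm_num [Matrix.cons_val_two, Matrix.tail_cons, Matrix.head_cons]
        ring
      have hylow := hull_lower (K := K) ![(1:ℝ), 1, 2] (by norm_num) (by norm_num)
        (by norm_num [Matrix.cons_val_two, Matrix.tail_cons, Matrix.head_cons]) y hy
      rw [hxv]
      norm_num at hylow
      linarith
    · rintro ⟨hxΔ, hmin⟩
      have h4 := hmin ![(1:ℝ), 1, 1] aΔ
      have hda : dotR ![(1:ℝ), 1, 2] ![1, 1, 1] = 4 := by rw [dotR3]; norm_num [Matrix.cons_val_two, Matrix.tail_cons, Matrix.head_cons]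
      refine level_subset ![(1:ℝ), 1, 2] (by norm_num) (by norm_num) (by norm_num [Matrix.cons_val_two, Matrix.tail_cons, Matrix.head_cons]) x hxΔ ?_
      rw [hda] at h4
      norm_num
      linarith
  · -- IsCompact
    rw [segment_eq_image ℝ]
    exact isCompact_Icc.image (by fun_prop)
  · -- faceDim = 1
    exact faceDim_seg
  · -- loose
    rintro F ⟨ξ, hξnn, rfl⟩ hFc hEF
    have haF := hEF (left_mem_segment ℝ _ _)
    have hbF := hEF (right_mem_segment ℝ _ _)
    have hpos : ∀ i, 0 < ξ i := by
      intro i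
      rcases (hξnn i).lt_or_eq with h | h
      · exact h
      exfalso
      obtain ⟨C, hC⟩ := isBounded_iff_forall_norm_le.1 hFc.isBounded
      set c : ℝ := max C 0 with hc
      have hc0 : 0 ≤ c := le_max_right _ _
      set xt : Fin 3 → ℝ := ![1, 1, 1] + c • (Pi.single i 1 : Fin 3 → ℝ) with hxt
      have hxtT : xt ∈ {x | ∃ α : Fin 3 →₀ ℕ, MvPowerSeries.coeff α
          ((((X 2 ^ 2 + X 0 * X 1) * (X 2 + X 0 * X 1) : MvPolynomial (Fin 3) K)) :
            MvPowerSeries (Fin 3) K) ≠ 0 ∧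
          ∃ z ∈ posOrthant 3, x = (fun i => (α i : ℝ)) + z} := by
        refine ⟨m3 1 1 1, by rw [coeff_fp]; norm_num, c • (Pi.single i 1 : Fin 3 → ℝ), ?_, by rw [cast111]⟩
        intro j
        simp only [Pi.smul_apply, smul_eq_mul]
        by_cases hj : j = i
        · subst hj; simp [hc0]
        · simp [Pi.single_apply, hj]
      have hxtΔ : xt ∈ newtonPolyhedron
          ((((X 2 ^ 2 + X 0 * X 1) * (X 2 + X 0 * X 1) : MvPolynomial (Fin 3) K)) :
            MvPowerSeries (Fin 3) K) := by
        rw [newtonPolyhedron]; exact subset_convexHull ℝ _ hxtT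
      have hdsingle : dotR ξ (c • (Pi.single i 1 : Fin 3 → ℝ)) = c * ξ i := by
        rw [dotR3]
        fin_cases i <;> simp [Pi.single_apply] <;> ring
      have hdxt : dotR ξ xt = dotR ξ ![1, 1, 1] := by
        rw [hxt, dotR_add, hdsingle, ← h]
        ring
      have hxtF : xt ∈ faceOf (newtonPolyhedron
          ((((X 2 ^ 2 + X 0 * X 1) * (X 2 + X 0 * X 1) : MvPolynomial (Fin 3) K)) :
            MvPowerSeries (Fin 3) K)) ξ := by
        refine ⟨hxtΔ, ?_⟩
        intro y hy
        rw [hdxt]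
        exact haF.2 y hy
      have hnorm := hC xt hxtF
      have hxi : xt i = 1 + c := by
        rw [hxt]
        simp only [Pi.add_apply, Pi.smul_apply, Pi.single_apply, if_pos rfl, smul_eq_mul,
          mul_one]
        have : (![1, 1, 1] : Fin 3 → ℝ) i = 1 := by fin_cases i <;> norm_num
        rw [this]
        norm_num
      have habs : xt i ≤ ‖xt‖ := le_trans (le_abs_self _)
        (by rw [← Real.norm_eq_abs]; exact norm_le_pi_norm xt i)
      rw [hxi] at habs
      have := le_max_left C 0
      linarith
    have hsum : ξ 2 = ξ 0 + ξ 1 := by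
      have h1 := haF.2 _ bΔ
      have h2 := hbF.2 _ aΔ
      rw [dA, dB] at h1 h2
      linarith
    have hFE : faceOf (newtonPolyhedron
        ((((X 2 ^ 2 + X 0 * X 1) * (X 2 + X 0 * X 1) : MvPolynomial (Fin 3) K)) :
          MvPowerSeries (Fin 3) K)) ξ ⊆ segment ℝ ![1, 1, 1] ![2, 2, 0] := by
      rintro x ⟨hxΔ, hxmin⟩
      refine level_subset ξ (hpos 0) (hpos 1) hsum x hxΔ ?_
      have := hxmin _ aΔ
      rw [dA] at this
      linarith
    calc faceDim (faceOf (newtonPolyhedron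
        ((((X 2 ^ 2 + X 0 * X 1) * (X 2 + X 0 * X 1) : MvPolynomial (Fin 3) K)) :
          MvPowerSeries (Fin 3) K)) ξ)
        ≤ faceDim (segment ℝ ![(1:ℝ), 1, 1] ![2, 2, 0]) :=
          Submodule.finrank_mono (vectorSpan_mono ℝ hFE)
      _ = 1 := faceDim_seg
  · -- restriction of f
    apply MvPowerSeries.ext
    intro α
    rw [coeff_restrict, coeff_qp]
    by_cases hmem : (fun i => (α i : ℝ)) ∈ segment ℝ ![(1:ℝ), 1, 1] ![2, 2, 0]
    · rw [if_pos hmem]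
      rcases (mem_segment_nat α).1 hmem with rfl | rfl
      · rw [coeff_fp]
        norm_num
      · rw [coeff_fp]
        norm_num
    · rw [if_neg hmem]
      have h1 : α ≠ m3 1 1 1 := by
        rintro rfl; exact hmem ((mem_segment_nat _).2 (Or.inl rfl))
      have h2 : α ≠ m3 2 2 0 := by
        rintro rfl; exact hmem ((mem_segment_nat _).2 (Or.inr rfl))
      rw [if_neg (fun e => h1 e.symm), if_neg (fun e => h2 e.symm)]
      norm_num
  · -- no factorization
    rintro ⟨g, h, E₁, E₂, hfgh, hEsum, hg, hh⟩
    have hG011 : MvPowerSeries.coeff (m3 0 1 1) g = 1 := by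
      have hcg := congrArg (MvPowerSeries.coeff (m3 0 1 1)) hg
      rw [coeff_restrict, coeff_gp] at hcg
      norm_num at hcg
      split_ifs at hcg with hsp
      · exact hcg
      · exact absurd hcg (by norm_num)
    have hH100 : MvPowerSeries.coeff (m3 1 0 0) h = 1 := by
      have hch := congrArg (MvPowerSeries.coeff (m3 1 0 0)) hh
      rw [coeff_restrict, coeff_xp] at hch
      norm_num at hch
      split_ifs at hch with hsp
      · exact hch
      · exact absurd hch (by norm_num)
    exact part3 g h hfgh hG011 hH100
end
end

section
/- Let Δ be a Newton polyhedron with vertex set V, let E be a compact edge with endpoints a, b, and suppose V ≠ {a,b}. Define ψ(ξ) = min_{v ∈ V∖{a,b}} ⟨ξ,v⟩ − ⟨ξ,a⟩ for ξ ∈ ℝ_{≥0}^n. If E is loose, then there is no ξ ∈ ℝ_{≥0}^n with ψ(ξ) < 0 and ⟨ξ,a⟩ = ⟨ξ,b⟩; equivalently, if ψ(ξ_1) < 0 for some ξ_1 with ⟨ξ_1,a⟩ = ⟨ξ_1,b⟩, then E is contained in a compact face of dimension ≥ 2. -/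
open scoped Pointwise

noncomputable section

namespace LooseAux

variable {n : ℕ}

lemma dotR_add (ξ x y : Fin n → ℝ) : dotR ξ (x + y) = dotR ξ x + dotR ξ y := by
  simp [dotR, mul_add, Finset.sum_add_distrib]

lemma dotR_smul (ξ : Fin n → ℝ) (c : ℝ) (x : Fin n → ℝ) :
    dotR ξ (c • x) = c * dotR ξ x := by
  simp only [dotR, Pi.smul_apply, smul_eq_mul, Finset.mul_sum]
  exact Finset.sum_congr rfl fun i _ => by ring

lemma dotR_nonneg {ξ x : Fin n → ℝ} (hξ : ∀ i, 0 ≤ ξ i) (hx : ∀ i, 0 ≤ x i) :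
    0 ≤ dotR ξ x :=
  Finset.sum_nonneg fun i _ => mul_nonneg (hξ i) (hx i)

lemma dotR_eq_zero {ξ x : Fin n → ℝ} (hξ : ∀ i, 0 < ξ i) (hx : ∀ i, 0 ≤ x i)
    (h : dotR ξ x = 0) : x = 0 := by
  have h0 : ∀ i ∈ Finset.univ, ξ i * x i = 0 := by
    rw [← Finset.sum_eq_zero_iff_of_nonneg (fun i _ => mul_nonneg (hξ i).le (hx i))]
    exact h
  funext i
  have := h0 i (Finset.mem_univ i)
  have : x i = 0 := by
    rcases mul_eq_zero.mp this with h1 | h1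
    · exact absurd h1 (hξ i).ne'
    · exact h1
  simpa using this

lemma dotR_sub (ξ x y : Fin n → ℝ) : dotR ξ (x - y) = dotR ξ x - dotR ξ y := by
  simp [dotR, mul_sub, Finset.sum_sub_distrib]


lemma dotR_finsum {ι : Type*} (ξ : Fin n → ℝ) (t : Finset ι) (f : ι → Fin n → ℝ) :
    dotR ξ (∑ j ∈ t, f j) = ∑ j ∈ t, dotR ξ (f j) := by
  unfold dotR
  simp only [Finset.sum_apply, Finset.mul_sum]
  rw [Finset.sum_comm]

variable {A : Set (Fin n → ℝ)}

lemma exists_rep {x : Fin n → ℝ} (hx : x ∈ convexHull ℝ (A + posOrthant n)) :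
    ∃ (ι : Type) (t : Finset ι) (w : ι → ℝ) (p q : ι → Fin n → ℝ),
      (∀ j ∈ t, 0 ≤ w j) ∧ (∑ j ∈ t, w j) = 1 ∧
      (∀ j ∈ t, p j ∈ A) ∧ (∀ j ∈ t, ∀ i, 0 ≤ q j i) ∧
      x = ∑ j ∈ t, w j • (p j + q j) := by
  rw [convexHull_eq] at hx
  obtain ⟨ι, t, w, z, hw0, hw1, hz, hcm⟩ := hx
  have hz' : ∀ j : ι, ∃ p q : Fin n → ℝ,
      (j ∈ t → p ∈ A ∧ (∀ i, 0 ≤ q i) ∧ z j = p + q) := by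
    intro j
    by_cases hj : j ∈ t
    · obtain ⟨p, hp, q, hq, hpq⟩ := hz j hj
      exact ⟨p, q, fun _ => ⟨hp, hq, hpq.symm⟩⟩
    · exact ⟨0, 0, fun h => absurd h hj⟩
  choose p q hpq using hz'
  refine ⟨ι, t, w, p, q, hw0, hw1, fun j hj => (hpq j hj).1,
    fun j hj => (hpq j hj).2.1, ?_⟩
  rw [← hcm, Finset.centerMass_eq_of_sum_1 _ _ hw1]
  exact Finset.sum_congr rfl fun j hj => by rw [(hpq j hj).2.2]

lemma dotR_rep_sum {ι : Type} (ξ : Fin n → ℝ) (t : Finset ι) (w : ι → ℝ)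
    (f : ι → Fin n → ℝ) :
    dotR ξ (∑ j ∈ t, w j • f j) = ∑ j ∈ t, w j * dotR ξ (f j) := by
  rw [dotR_finsum]
  exact Finset.sum_congr rfl fun j _ => dotR_smul _ _ _

lemma lower_bound {ξ : Fin n → ℝ} (hξ : ∀ i, 0 ≤ ξ i) {c : ℝ}
    (hA : ∀ g ∈ A, c ≤ dotR ξ g) {x : Fin n → ℝ}
    (hx : x ∈ convexHull ℝ (A + posOrthant n)) : c ≤ dotR ξ x := by
  obtain ⟨ι, t, w, p, q, hw0, hw1, hp, hq, hxe⟩ := exists_rep hx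
  have hdot : dotR ξ x = ∑ j ∈ t, w j * dotR ξ (p j + q j) := by
    rw [hxe, dotR_rep_sum]
  rw [hdot]
  calc c = ∑ j ∈ t, w j * c := by rw [← Finset.sum_mul, hw1, one_mul]
    _ ≤ ∑ j ∈ t, w j * dotR ξ (p j + q j) := by
        refine Finset.sum_le_sum fun j hj => ?_
        refine mul_le_mul_of_nonneg_left ?_ (hw0 j hj)
        rw [dotR_add]
        have h1 := hA (p j) (hp j hj)
        have h2 : (0:ℝ) ≤ dotR ξ (q j) := dotR_nonneg hξ (hq j hj)
        linarith

lemma exists_gen_le {ξ : Fin n → ℝ} (hξ : ∀ i, 0 ≤ ξ i) {x : Fin n → ℝ}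
    (hx : x ∈ convexHull ℝ (A + posOrthant n)) :
    ∃ g ∈ A, dotR ξ g ≤ dotR ξ x := by
  obtain ⟨ι, t, w, p, q, hw0, hw1, hp, hq, hxe⟩ := exists_rep hx
  have ht : t.Nonempty := by
    rcases Finset.eq_empty_or_nonempty t with h | h
    · rw [h] at hw1; simp at hw1
    · exact h
  obtain ⟨j₀, hj₀, hmin⟩ := Finset.exists_min_image t (fun j => dotR ξ (p j)) ht
  refine ⟨p j₀, hp j₀ hj₀, ?_⟩
  have hdot : dotR ξ x = ∑ j ∈ t, w j * dotR ξ (p j + q j) := by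
    rw [hxe, dotR_rep_sum]
  rw [hdot]
  calc dotR ξ (p j₀) = ∑ j ∈ t, w j * dotR ξ (p j₀) := by
        rw [← Finset.sum_mul, hw1, one_mul]
    _ ≤ ∑ j ∈ t, w j * dotR ξ (p j + q j) := by
        refine Finset.sum_le_sum fun j hj => ?_
        refine mul_le_mul_of_nonneg_left ?_ (hw0 j hj)
        rw [dotR_add]
        have h2 : (0:ℝ) ≤ dotR ξ (q j) := dotR_nonneg hξ (hq j hj)
        have := hmin j hj
        linarith

lemma add_mem_hull {x c : Fin n → ℝ} (hx : x ∈ convexHull ℝ (A + posOrthant n))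
    (hc : ∀ i, 0 ≤ c i) : x + c ∈ convexHull ℝ (A + posOrthant n) := by
  obtain ⟨ι, t, w, p, q, hw0, hw1, hp, hq, hxe⟩ := exists_rep hx
  have hxc : x + c = t.centerMass w (fun j => p j + (q j + c)) := by
    rw [Finset.centerMass_eq_of_sum_1 _ _ hw1, hxe]
    have : ∀ j, w j • (p j + (q j + c)) = w j • (p j + q j) + w j • c := by
      intro j; rw [← smul_add, ← add_assoc]
    simp only [this, Finset.sum_add_distrib, ← Finset.sum_smul, hw1, one_smul]
  rw [hxc]
  refine Finset.centerMass_mem_convexHull t hw0 (by rw [hw1]; norm_num) fun j hj => ?_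
  exact Set.add_mem_add (hp j hj) (fun i => add_nonneg (hq j hj i) (hc i))

lemma finite_sublevel {S : Set (Fin n → ℕ)} {ξ : Fin n → ℝ} (hξ : ∀ i, 0 < ξ i) (B : ℝ) :
    {g ∈ (fun α : Fin n → ℕ => fun i => (α i : ℝ)) '' S | dotR ξ g ≤ B}.Finite := by
  have hbox : ({α : Fin n → ℕ | ∀ i, α i ≤ ⌊B / ξ i⌋₊}).Finite := by
    have : {α : Fin n → ℕ | ∀ i, α i ≤ ⌊B / ξ i⌋₊}
        = Set.pi Set.univ (fun i => Set.Iic ⌊B / ξ i⌋₊) := by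
      ext α; simp [Set.mem_pi, Pi.le_def]
    rw [this]
    exact Set.Finite.pi fun i => Set.finite_Iic _
  refine Set.Finite.subset (hbox.image (fun α => fun i => (α i : ℝ))) ?_
  rintro g ⟨⟨α, hα, rfl⟩, hB⟩
  refine ⟨α, fun i => ?_, rfl⟩
  have h1 : ξ i * (α i : ℝ) ≤ dotR ξ (fun i => (α i : ℝ)) := by
    refine Finset.single_le_sum (f := fun j => ξ j * (α j : ℝ)) (fun j _ => ?_) (Finset.mem_univ i)
    exact mul_nonneg (hξ j).le (Nat.cast_nonneg _)
  have h2 : (α i : ℝ) ≤ B / ξ i := by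
    rw [le_div_iff₀ (hξ i)]
    calc (α i : ℝ) * ξ i = ξ i * (α i : ℝ) := by ring
      _ ≤ _ := le_trans h1 hB
  exact Nat.le_floor h2

end LooseAux


/-- If `E` is a loose edge with endpoints `a`, `b` and the vertex set of `Δ` contains a
vertex other than `a`, `b`, then there is no `ξ ≥ 0` with `⟨ξ,a⟩ = ⟨ξ,b⟩` and
`ψ(ξ) = min_{v ∈ V∖{a,b}} (⟨ξ,v⟩ - ⟨ξ,a⟩) < 0`. -/
theorem looseEdge_psi_nonneg {n : ℕ} (Δ E : Set (Fin n → ℝ)) (a b : Fin n → ℝ)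
    (hΔ : IsNewtonPolyhedron Δ) (hEface : IsFaceOf Δ E) (hcpt : IsCompact E)
    (hdim : faceDim E = 1) (hseg : E = segment ℝ a b) (hab : a ≠ b)
    (hV : ∃ v : Fin n → ℝ, IsVertexOf Δ v ∧ v ≠ a ∧ v ≠ b)
    (hloose : IsLooseEdge Δ E) :
    ¬ ∃ ξ : Fin n → ℝ, (∀ i, 0 ≤ ξ i) ∧ dotR ξ a = dotR ξ b ∧
      sInf {r : ℝ | ∃ v : Fin n → ℝ, IsVertexOf Δ v ∧ v ≠ a ∧ v ≠ b ∧
        r = dotR ξ v - dotR ξ a} < 0 := by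
  rintro ⟨ξ₁, hξ₁, habeq, hinf⟩
  obtain ⟨S, hSne, hΔeq⟩ := hΔ
  set A : Set (Fin n → ℝ) := (fun α : Fin n → ℕ => fun i => (α i : ℝ)) '' S with hA
  subst hΔeq
  set Δ : Set (Fin n → ℝ) := convexHull ℝ (A + posOrthant n) with hΔdef
  obtain ⟨ξ₀, hξ₀, hEeq⟩ := hEface
  have haE : a ∈ E := by rw [hseg]; exact left_mem_segment ℝ a b
  have hbE : b ∈ E := by rw [hseg]; exact right_mem_segment ℝ a b
  have haFace : a ∈ faceOf Δ ξ₀ := hEeq ▸ haE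
  have hbFace : b ∈ faceOf Δ ξ₀ := hEeq ▸ hbE
  have haΔ : a ∈ Δ := haFace.1
  have hbΔ : b ∈ Δ := hbFace.1
  set m := dotR ξ₀ a with hm
  have hmin : ∀ x ∈ Δ, m ≤ dotR ξ₀ x := haFace.2
  have hbm : dotR ξ₀ b = m := le_antisymm (hbFace.2 a haΔ) (hmin b hbΔ)
  have hmemE : ∀ x ∈ Δ, dotR ξ₀ x = m → x ∈ E := by
    intro x hx hxm
    rw [hEeq]
    exact ⟨hx, fun y hy => hxm ▸ hmin y hy⟩
  set L := dotR ξ₁ a with hL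
  have hconst : ∀ x ∈ E, dotR ξ₁ x = L := by
    intro x hx
    rw [hseg] at hx
    obtain ⟨u, v, hu, hv, huv, hx⟩ := hx
    rw [← hx, LooseAux.dotR_add, LooseAux.dotR_smul, LooseAux.dotR_smul, ← habeq, ← hL,
      ← add_mul, huv, one_mul]
  have hAnn : ∀ g ∈ A, ∀ i, (0:ℝ) ≤ g i := by
    rintro g ⟨α, -, rfl⟩ i
    exact Nat.cast_nonneg _
  have hAΔ : ∀ g ∈ A, g ∈ Δ := by
    intro g hg
    have h0 : (0 : Fin n → ℝ) ∈ posOrthant n := fun i => le_rfl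
    have := Set.add_mem_add hg h0
    rw [add_zero] at this
    exact subset_convexHull ℝ _ this
  have hA1nn : ∀ g ∈ A, 0 ≤ dotR ξ₁ g := fun g hg => LooseAux.dotR_nonneg hξ₁ (hAnn g hg)
  have hL0 : 0 ≤ L := LooseAux.lower_bound hξ₁ hA1nn haΔ
  -- strict positivity of ξ₀
  have hξ₀pos : ∀ i, 0 < ξ₀ i := by
    intro i
    rcases (hξ₀ i).lt_or_eq with h | h
    · exact h
    · exfalso
      have hsingle : ∀ j, (0:ℝ) ≤ (Pi.single i (1:ℝ) : Fin n → ℝ) j := by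
        intro j
        rcases eq_or_ne j i with rfl | hne
        · simp
        · simp [Pi.single_apply, hne]
      have hdots : dotR ξ₀ ((Pi.single i (1:ℝ) : Fin n → ℝ)) = ξ₀ i := by
        simp [dotR, Pi.single_apply, mul_ite, Finset.sum_ite_eq]
      obtain ⟨R, hR⟩ := (hcpt.image (continuous_apply i)).bddAbove
      have haR : a i ≤ R := hR ⟨a, haE, rfl⟩
      have hmem : ∀ t : ℝ, 0 ≤ t → a + t • (Pi.single i (1:ℝ) : Fin n → ℝ) ∈ E := by
        intro t ht
        apply hmemE
        · exact LooseAux.add_mem_hull haΔ (fun j => mul_nonneg ht (hsingle j))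
        · rw [LooseAux.dotR_add, LooseAux.dotR_smul, hdots, ← h, mul_zero, add_zero]
      have hRmem := hR ⟨a + (R + 1 - a i) • (Pi.single i (1:ℝ) : Fin n → ℝ),
        hmem _ (by linarith), rfl⟩
      simp at hRmem
      linarith
  -- extract a vertex with negative value
  have hneg : ∃ v, IsVertexOf Δ v ∧ dotR ξ₁ v < L := by
    by_contra h
    push_neg at h
    have h0 : 0 ≤ sInf {r : ℝ | ∃ v : Fin n → ℝ, IsVertexOf Δ v ∧ v ≠ a ∧ v ≠ b ∧
        r = dotR ξ₁ v - dotR ξ₁ a} := by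
      apply Real.sInf_nonneg
      rintro r ⟨v, hv, -, -, rfl⟩
      have := h v hv
      rw [← hL]
      linarith
    linarith
  obtain ⟨v, hvvert, hvlt⟩ := hneg
  have hvΔ : v ∈ Δ := by
    obtain ⟨ζ, -, hfv⟩ := hvvert
    have hv : v ∈ ({v} : Set (Fin n → ℝ)) := rfl
    rw [hfv] at hv
    exact hv.1
  obtain ⟨g₀, hg₀A, hg₀le⟩ := LooseAux.exists_gen_le hξ₁ hvΔ
  have hg₀lt : dotR ξ₁ g₀ < L := lt_of_le_of_lt hg₀le hvlt
  -- numerators are positive on the relevant generators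
  have hnum : ∀ g ∈ A, dotR ξ₁ g < L → m < dotR ξ₀ g := by
    intro g hg hlt
    rcases (hmin g (hAΔ g hg)).lt_or_eq with h | h
    · exact h
    · exfalso
      have hgE : g ∈ E := hmemE g (hAΔ g hg) h.symm
      rw [hconst g hgE] at hlt
      exact lt_irrefl _ hlt
  set r₀ : ℝ := (dotR ξ₀ g₀ - m) / (L - dotR ξ₁ g₀) with hr₀
  have hden₀ : 0 < L - dotR ξ₁ g₀ := sub_pos.2 hg₀lt
  have hr₀nn : 0 ≤ r₀ :=
    div_nonneg (sub_nonneg.2 (hmin g₀ (hAΔ g₀ hg₀A))) hden₀.le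
  have hg₀eq : dotR ξ₀ g₀ - m = r₀ * (L - dotR ξ₁ g₀) :=
    (div_mul_cancel₀ _ hden₀.ne').symm
  set T : Set (Fin n → ℝ) :=
    {g | g ∈ A ∧ dotR ξ₁ g < L ∧ dotR ξ₀ g ≤ m + r₀ * L} with hT
  have hTfin : T.Finite := by
    refine Set.Finite.subset (LooseAux.finite_sublevel (S := S) hξ₀pos (m + r₀ * L)) ?_
    rintro g ⟨hgA, -, hle⟩
    exact ⟨hgA, hle⟩
  have hg₀T : g₀ ∈ T := by
    refine ⟨hg₀A, hg₀lt, ?_⟩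
    have h1 : r₀ * (L - dotR ξ₁ g₀) ≤ r₀ * L :=
      mul_le_mul_of_nonneg_left (by linarith [hA1nn g₀ hg₀A]) hr₀nn
    linarith
  obtain ⟨g', hg'T, hg'min⟩ :=
    Set.exists_min_image T (fun g => (dotR ξ₀ g - m) / (L - dotR ξ₁ g)) hTfin ⟨g₀, hg₀T⟩
  obtain ⟨hg'A, hg'lt, hg'le⟩ := hg'T
  set ε : ℝ := (dotR ξ₀ g' - m) / (L - dotR ξ₁ g') with hε
  have hden' : 0 < L - dotR ξ₁ g' := sub_pos.2 hg'lt
  have hεpos : 0 < ε := div_pos (sub_pos.2 (hnum g' hg'A hg'lt)) hden'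
  have hεr₀ : ε ≤ r₀ := hg'min g₀ hg₀T
  have hg'eq : dotR ξ₀ g' - m = ε * (L - dotR ξ₁ g') :=
    (div_mul_cancel₀ _ hden'.ne').symm
  -- the new direction
  set η : Fin n → ℝ := fun i => ξ₀ i + ε * ξ₁ i with hηdef
  have hη : ∀ i, 0 ≤ η i := fun i =>
    add_nonneg (hξ₀ i) (mul_nonneg hεpos.le (hξ₁ i))
  have hηpos : ∀ i, 0 < η i := fun i =>
    add_pos_of_pos_of_nonneg (hξ₀pos i) (mul_nonneg hεpos.le (hξ₁ i))
  have dotη : ∀ x, dotR η x = dotR ξ₀ x + ε * dotR ξ₁ x := by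
    intro x
    simp only [dotR, hηdef, add_mul, Finset.sum_add_distrib, Finset.mul_sum, mul_assoc]
  set mη : ℝ := m + ε * L with hmη
  have key : ∀ g ∈ A, mη ≤ dotR η g := by
    intro g hg
    rw [dotη]
    rcases le_or_gt L (dotR ξ₁ g) with h | h
    · have h1 := hmin g (hAΔ g hg)
      have h2 : ε * L ≤ ε * dotR ξ₁ g := mul_le_mul_of_nonneg_left h hεpos.le
      linarith
    · rcases le_or_gt (dotR ξ₀ g) (m + r₀ * L) with h2 | h2
      · have hgT : g ∈ T := ⟨hg, h, h2⟩
        have h3 := hg'min g hgT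
        have hden : 0 < L - dotR ξ₁ g := sub_pos.2 h
        have h4 : ε * (L - dotR ξ₁ g) ≤ dotR ξ₀ g - m := (le_div_iff₀ hden).1 h3
        nlinarith
      · have e1 : ε * L ≤ r₀ * L := mul_le_mul_of_nonneg_right hεr₀ hL0
        have e2 : 0 ≤ ε * dotR ξ₁ g := mul_nonneg hεpos.le (hA1nn g hg)
        linarith
  have hLB : ∀ x ∈ Δ, mη ≤ dotR η x := fun x hx => LooseAux.lower_bound hη key hx
  have hva : dotR η a = mη := by rw [dotη, ← hm, ← hL]
  have hvb : dotR η b = mη := by rw [dotη, hbm, hconst b hbE]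
  have hvg' : dotR η g' = mη := by rw [dotη]; linarith
  set F : Set (Fin n → ℝ) := faceOf Δ η with hF
  have hmemF : ∀ x ∈ Δ, dotR η x = mη → x ∈ F := by
    intro x hx hxv
    exact ⟨hx, fun y hy => hxv ▸ hLB y hy⟩
  have haF : a ∈ F := hmemF a haΔ hva
  have hbF : b ∈ F := hmemF b hbΔ hvb
  have hg'F : g' ∈ F := hmemF g' (hAΔ g' hg'A) hvg'
  have hFconv : Convex ℝ F := by
    intro x hx y hy u v hu hv huv
    refine ⟨(convex_convexHull ℝ _) hx.1 hy.1 hu hv huv, fun z hz => ?_⟩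
    have h1 : u * dotR η x ≤ u * dotR η z := mul_le_mul_of_nonneg_left (hx.2 z hz) hu
    have h2 : v * dotR η y ≤ v * dotR η z := mul_le_mul_of_nonneg_left (hy.2 z hz) hv
    have h3 : u * dotR η z + v * dotR η z = dotR η z := by rw [← add_mul, huv, one_mul]
    rw [LooseAux.dotR_add, LooseAux.dotR_smul, LooseAux.dotR_smul]
    linarith
  have hEF : E ⊆ F := by
    rw [hseg]
    exact hFconv.segment_subset haF hbF
  set AF : Set (Fin n → ℝ) := {g | g ∈ A ∧ dotR η g = mη} with hAF
  have hAFfin : AF.Finite := by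
    refine Set.Finite.subset (LooseAux.finite_sublevel (S := S) hηpos mη) ?_
    rintro g ⟨hgA, hgv⟩
    exact ⟨hgA, le_of_eq hgv⟩
  have hg'AF : g' ∈ AF := ⟨hg'A, hvg'⟩
  have hFsub : F ⊆ convexHull ℝ AF := by
    intro x hx
    have hxval : dotR η x = mη := le_antisymm (hva ▸ hx.2 a haΔ) (hLB x hx.1)
    obtain ⟨ι, t, w, p, q, hw0, hw1, hp, hq, hxe⟩ := LooseAux.exists_rep hx.1
    have hterm : ∀ j ∈ t, mη ≤ dotR η (p j + q j) := by
      intro j hj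
      rw [LooseAux.dotR_add]
      have h1 := key (p j) (hp j hj)
      have h2 := LooseAux.dotR_nonneg hη (hq j hj)
      linarith
    have hsum : ∑ j ∈ t, w j * (dotR η (p j + q j) - mη) = 0 := by
      have hd : dotR η x = ∑ j ∈ t, w j * dotR η (p j + q j) := by
        rw [hxe, LooseAux.dotR_rep_sum]
      simp only [mul_sub, Finset.sum_sub_distrib, ← Finset.sum_mul, hw1]
      rw [← hd, hxval]
      ring
    have hzero : ∀ j ∈ t, w j * (dotR η (p j + q j) - mη) = 0 :=
      (Finset.sum_eq_zero_iff_of_nonneg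
        (fun j hj => mul_nonneg (hw0 j hj) (sub_nonneg.2 (hterm j hj)))).1 hsum
    have hz' : ∀ j ∈ t, w j ≠ 0 → (p j + q j) ∈ AF := by
      intro j hj hwj
      have hfj : dotR η (p j + q j) = mη := by
        rcases mul_eq_zero.1 (hzero j hj) with h | h
        · exact absurd h hwj
        · linarith [h]
      have h1 := key (p j) (hp j hj)
      have h2 := LooseAux.dotR_nonneg hη (hq j hj)
      rw [LooseAux.dotR_add] at hfj
      have hqj : dotR η (q j) = 0 := by linarith
      have hq0 : q j = 0 := LooseAux.dotR_eq_zero hηpos (hq j hj) hqj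
      rw [hq0, add_zero]
      exact ⟨hp j hj, by linarith⟩
    have hxcm : x = t.centerMass w (fun j => if w j = 0 then g' else p j + q j) := by
      rw [Finset.centerMass_eq_of_sum_1 _ _ hw1, hxe]
      refine Finset.sum_congr rfl fun j hj => ?_
      by_cases h : w j = 0
      · simp [h]
      · simp [h]
    rw [hxcm]
    refine Finset.centerMass_mem_convexHull t hw0 (by rw [hw1]; norm_num) fun j hj => ?_
    by_cases h : w j = 0
    · simpa [h] using hg'AF
    · simpa [h] using hz' j hj h
  have hhullF : convexHull ℝ AF ⊆ F :=
    convexHull_min (fun g hg => hmemF g (hAΔ g hg.1) hg.2) hFconv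
  have hFcpt : IsCompact F := by
    have : F = convexHull ℝ AF := Set.Subset.antisymm hFsub hhullF
    rw [this]
    exact hAFfin.isCompact_convexHull ℝ
  have hFface : IsFaceOf Δ F := ⟨η, hη, rfl⟩
  have hle := hloose.2.2.2 F hFface hFcpt hEF
  -- dimension at least 2
  have hu : b - a ∈ vectorSpan ℝ F := by
    have := vsub_mem_vectorSpan ℝ hbF haF
    simpa using this
  have hw : g' - a ∈ vectorSpan ℝ F := by
    have := vsub_mem_vectorSpan ℝ hg'F haF
    simpa using this
  have hune : b - a ≠ 0 := sub_ne_zero.2 (Ne.symm hab)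
  have hd1 : dotR ξ₁ (b - a) = 0 := by
    rw [LooseAux.dotR_sub, ← habeq, sub_self]
  have hd2 : dotR ξ₁ (g' - a) < 0 := by
    rw [LooseAux.dotR_sub, ← hL]
    linarith
  have hind : LinearIndependent ℝ
      ![(⟨b - a, hu⟩ : vectorSpan ℝ F), ⟨g' - a, hw⟩] := by
    rw [LinearIndependent.pair_iff]
    intro s t hst
    have hst' : s • (b - a) + t • (g' - a) = 0 := by
      have := congrArg (Subtype.val) hst
      simpa using this
    have ht0 : t = 0 := by
      have hd := congrArg (dotR ξ₁) hst'
      rw [LooseAux.dotR_add, LooseAux.dotR_smul, LooseAux.dotR_smul, hd1, mul_zero,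
        zero_add] at hd
      have hz : dotR ξ₁ (0 : Fin n → ℝ) = 0 := by simp [dotR]
      rw [hz] at hd
      rcases mul_eq_zero.1 hd with h | h
      · exact h
      · exact absurd h hd2.ne
    have hs0 : s • (b - a) = 0 := by
      rw [ht0, zero_smul, add_zero] at hst'
      exact hst'
    rcases smul_eq_zero.1 hs0 with h | h
    · exact ⟨h, ht0⟩
    · exact absurd h hune
  have h2le : 2 ≤ faceDim F := by
    have := hind.fintype_card_le_finrank
    simpa [faceDim] using this
  omega
end
end
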